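/- arXiv:2402.06893 — 3 statements merged into one kernel-verified Lean document; each statement's English description precedes it below -/
import Mathlib

section
/- For each integer m ≥ 2, let g_m = ℝ ⋉_A ℝ^{2m+1} with A = diag(0, 1/m, 2/m, …, 1, −1/m, −2/m, …, −1), with dual basis (x^1,…,x^{m+1}, y^1,…,y^{m+1}) of g_m^* and Chevalley–Eilenberg differential determined by dx^1 = dx^2 = 0, dx^{α} = −((α−2)/m) x^1∧x^{α} for 3 ≤ α ≤ m+1, dy^1 = −x^1∧y^1, and dy^{β} = ((β−1)/m) x^1∧y^{β} for 2 ≤ β ≤ m+1. Then the 2-form ω := Σ_{α=1}^{m+1} x^α∧y^α is nondegenerate, the 1-form θ := (1/m) x^1 is closed, and dω = θ ∧ ω; that is, ω defines a left-invariant locally conformally symplectic structure with Lee form θ. -/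
set_option synthInstance.maxHeartbeats 1000000
set_option maxHeartbeats 1000000

section Aux

/-- A product of two anticommuting square-zero elements squares to zero. -/
private lemma aux_pair_sq {A : Type*} [Ring A] {a b : A} (ha : a * a = 0)
    (hba : b * a = -(a * b)) : (a * b) * (a * b) = 0 := by
  calc (a * b) * (a * b) = a * ((b * a) * b) := by rw [mul_assoc, mul_assoc]
    _ = a * (-(a * b) * b) := by rw [hba]
    _ = -(a * (a * (b * b))) := by rw [neg_mul, mul_assoc, mul_neg]
    _ = 0 := by rw [← mul_assoc, ha, zero_mul, neg_zero]

/-- Products of pairs of pairwise-anticommuting elements commute. -/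
private lemma aux_pair_comm {A : Type*} [Ring A] {a b c d : A}
    (hac : a * c = -(c * a)) (had : a * d = -(d * a))
    (hbc : b * c = -(c * b)) (hbd : b * d = -(d * b)) :
    (a * b) * (c * d) = (c * d) * (a * b) := by
  calc (a * b) * (c * d) = a * ((b * c) * d) := by rw [mul_assoc, mul_assoc]
    _ = a * (-(c * b) * d) := by rw [hbc]
    _ = -(a * (c * (b * d))) := by rw [neg_mul, mul_assoc, mul_neg]
    _ = -(a * (c * (-(d * b)))) := by rw [hbd]
    _ = a * (c * (d * b)) := by rw [mul_neg, mul_neg, neg_neg]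
    _ = (a * c) * (d * b) := by rw [mul_assoc]
    _ = -(c * a) * (d * b) := by rw [hac]
    _ = -(c * ((a * d) * b)) := by rw [neg_mul, mul_assoc, mul_assoc]
    _ = -(c * ((-(d * a)) * b)) := by rw [had]
    _ = c * ((d * a) * b) := by rw [neg_mul, mul_neg, neg_neg]
    _ = (c * d) * (a * b) := by rw [mul_assoc, mul_assoc]

/-- A power of a sum of pairwise-commuting square-zero elements vanishes as soon as
the exponent exceeds the number of terms. -/
private lemma aux_sum_pow_zero {A : Type*} [Ring A] :
    ∀ (L : List A), (∀ a ∈ L, a * a = 0) → (∀ a ∈ L, ∀ b ∈ L, Commute a b) →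
      ∀ n, L.length < n → L.sum ^ n = 0
  | [], _, _, n, hn => by
      simp only [List.sum_nil]
      exact zero_pow (by simp at hn; omega)
  | a :: t, hsq, hcomm, n, hn => by
      have hat : Commute a t.sum :=
        Commute.list_sum_right _ _ fun b hb =>
          hcomm a (List.mem_cons_self) b (List.mem_cons_of_mem _ hb)
      have IH := aux_sum_pow_zero t (fun u hu => hsq u (List.mem_cons_of_mem _ hu))
        (fun u hu v hv => hcomm u (List.mem_cons_of_mem _ hu) v (List.mem_cons_of_mem _ hv))
      rw [List.sum_cons, hat.add_pow]
      apply Finset.sum_eq_zero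
      intro k _
      rcases lt_or_ge k 2 with h2 | h2
      · have hlen : t.length < n - k := by
          simp only [List.length_cons] at hn; omega
        rw [IH _ hlen, mul_zero, zero_mul]
      · have hak : a ^ k = 0 := by
          have : a ^ k = (a * a) * a ^ (k - 2) := by
            rw [← pow_two, ← pow_add]
            congr 1
            omega
          rw [this, hsq a (List.mem_cons_self), zero_mul]
        rw [hak, zero_mul, zero_mul]

/-- The top power of a sum of pairwise-commuting square-zero elements is the
factorial multiple of their ordered product. -/
private lemma aux_sum_pow_fact {A : Type*} [Ring A] :
    ∀ (L : List A), (∀ a ∈ L, a * a = 0) → (∀ a ∈ L, ∀ b ∈ L, Commute a b) →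
      L.sum ^ L.length = Nat.factorial L.length • L.prod
  | [], _, _ => by simp
  | a :: t, hsq, hcomm => by
      have hat : Commute a t.sum :=
        Commute.list_sum_right _ _ fun b hb =>
          hcomm a (List.mem_cons_self) b (List.mem_cons_of_mem _ hb)
      have hsq' := fun u hu => hsq u (List.mem_cons_of_mem a hu)
      have hcomm' := fun u hu v hv =>
        hcomm u (List.mem_cons_of_mem a hu) v (List.mem_cons_of_mem a hv)
      have IH := aux_sum_pow_fact t hsq' hcomm'
      have hzero := aux_sum_pow_zero t hsq' hcomm'
      rw [List.sum_cons, List.length_cons, hat.add_pow]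
      rw [Finset.sum_eq_single 1]
      · rw [pow_one, Nat.add_sub_cancel, Nat.choose_one_right, IH, List.prod_cons]
        rw [mul_smul_comm, smul_mul_assoc]
        rw [(Nat.cast_commute (t.length + 1) (a * t.prod)).symm.eq, ← nsmul_eq_mul, smul_smul,
          Nat.factorial_succ]
        ring_nf
      · intro k _ hk1
        rcases Nat.lt_or_ge k 2 with h2 | h2
        · interval_cases k
          · rw [pow_zero, one_mul, hzero _ (by omega), zero_mul]
          · exact absurd rfl hk1
        · have hak : a ^ k = 0 := by
            have : a ^ k = (a * a) * a ^ (k - 2) := by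
              rw [← pow_two, ← pow_add]
              congr 1
              omega
            rw [this, hsq a (List.mem_cons_self), zero_mul]
          rw [hak, zero_mul, zero_mul]
      · intro h1
        exact absurd (Finset.mem_range.mpr (by omega)) h1

/-- If a dual functional kills every vector occurring in a product of pairs of
generators, then the corresponding contraction of the product vanishes. -/
private lemma aux_contract_kill {V : Type*} [AddCommGroup V] [Module ℝ V]
    (ε : Module.Dual ℝ V) :
    ∀ (L : List (V × V)), (∀ p ∈ L, ε p.1 = 0 ∧ ε p.2 = 0) →
      CliffordAlgebra.contractLeft (Q := (0 : QuadraticForm ℝ V)) ε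
        ((L.map fun p => ExteriorAlgebra.ι ℝ p.1 * ExteriorAlgebra.ι ℝ p.2).prod) = 0
  | [], _ => by
      simp only [List.map_nil, List.prod_nil]
      exact CliffordAlgebra.contractLeft_one _ _
  | p :: t, h => by
      have h1 := (h p (List.mem_cons_self)).1
      have h2 := (h p (List.mem_cons_self)).2
      have IH := aux_contract_kill ε t fun q hq => h q (List.mem_cons_of_mem _ hq)
      rw [List.map_cons, List.prod_cons, mul_assoc,
        CliffordAlgebra.contractLeft_ι_mul, CliffordAlgebra.contractLeft_ι_mul, IH, h1, h2]
      simp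

/-- A product of pairs of generators admitting a biorthogonal system of dual
functionals is nonzero in the exterior algebra. -/
private lemma aux_prod_pairs_ne_zero {V : Type*} [AddCommGroup V] [Module ℝ V] :
    ∀ (L : List (V × V)),
      (∀ (p : V × V) (t : List (V × V)), p :: t <:+ L →
        ∃ ε η : Module.Dual ℝ V, ε p.1 = 1 ∧ ε p.2 = 0 ∧ η p.2 = 1 ∧
          ∀ q ∈ t, ε q.1 = 0 ∧ ε q.2 = 0 ∧ η q.1 = 0 ∧ η q.2 = 0) →
      (L.map fun p => ExteriorAlgebra.ι ℝ p.1 * ExteriorAlgebra.ι ℝ p.2).prod ≠ 0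
  | [], _ => by simp
  | p :: t, H => by
      obtain ⟨ε, η, hε1, hε2, hη2, hkill⟩ := H p t (List.suffix_refl _)
      have IH := aux_prod_pairs_ne_zero t
        (fun q s hs => H q s (hs.trans (t.suffix_cons p)))
      intro h0
      apply IH
      rw [List.map_cons, List.prod_cons] at h0
      set P := (t.map fun p => ExteriorAlgebra.ι ℝ p.1 * ExteriorAlgebra.ι ℝ p.2).prod with hP
      have e1 : CliffordAlgebra.contractLeft (Q := (0 : QuadraticForm ℝ V)) ε
          ((ExteriorAlgebra.ι ℝ p.1 * ExteriorAlgebra.ι ℝ p.2) * P)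
            = ExteriorAlgebra.ι ℝ p.2 * P := by
        rw [mul_assoc, CliffordAlgebra.contractLeft_ι_mul, CliffordAlgebra.contractLeft_ι_mul,
          aux_contract_kill ε t (fun q hq => ⟨(hkill q hq).1, (hkill q hq).2.1⟩),
          hε1, hε2]
        simp
      have e2 : CliffordAlgebra.contractLeft (Q := (0 : QuadraticForm ℝ V)) η
          (ExteriorAlgebra.ι ℝ p.2 * P) = P := by
        rw [CliffordAlgebra.contractLeft_ι_mul,
          aux_contract_kill η t (fun q hq => ⟨(hkill q hq).2.2.1, (hkill q hq).2.2.2⟩),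
          hη2]
        simp
      rw [← e2, ← e1, h0, map_zero, map_zero]

end Aux

/-!
STATEMENT 15: for each `m ≥ 2`, on the Chevalley–Eilenberg complex of the Lie
algebra `g_m = ℝ ⋉_A ℝ^{2m+1}` (with the structure equations recorded below),
the 2-form `ω = Σ x^α ∧ y^α` is nondegenerate, the 1-form `θ = (1/m) x^1` is
closed, and `dω = θ ∧ ω`; that is, `ω` is a left-invariant locally
conformally symplectic structure with Lee form `θ`.

The exterior algebra `⋀^• g_m^*` is realized as `ExteriorAlgebra ℝ V` with
`V = (Fin (m+1) ⊕ Fin (m+1)) → ℝ`, the generators `x^1, …, x^{m+1}` (here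
`x 0, …, x m`) and `y^1, …, y^{m+1}` (here `y 0, …, y m`) being the images of
the standard basis vectors.  The Chevalley–Eilenberg differential is an
antiderivation `d` determined by its values on the generators:
`dx^1 = dx^2 = 0`, `dx^α = -((α-2)/m) x^1 ∧ x^α` for `3 ≤ α ≤ m+1`,
`dy^1 = -x^1 ∧ y^1` and `dy^β = ((β-1)/m) x^1 ∧ y^β` for `2 ≤ β ≤ m+1`
(in the 0-based indexing below: `d(x a) = ((1-a)/m) x 0 ∧ x a` and
`d(y 0) = -(x 0 ∧ y 0)`, `d(y b) = (b/m) x 0 ∧ y b` for `b ≥ 1`). -/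
theorem solvmanifold_lcs_structure (m : ℕ) (hm : 2 ≤ m)
    (d : ExteriorAlgebra ℝ ((Fin (m + 1) ⊕ Fin (m + 1)) → ℝ) →ₗ[ℝ]
         ExteriorAlgebra ℝ ((Fin (m + 1) ⊕ Fin (m + 1)) → ℝ))
    -- the generators `x^α`, `y^β` of `⋀^1 g_m^*`
    (x y : Fin (m + 1) → ExteriorAlgebra ℝ ((Fin (m + 1) ⊕ Fin (m + 1)) → ℝ))
    (hx : ∀ a, x a = ExteriorAlgebra.ι ℝ (Pi.single (Sum.inl a) 1))
    (hy : ∀ b, y b = ExteriorAlgebra.ι ℝ (Pi.single (Sum.inr b) 1))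
    -- `d` is an antiderivation (degree-one graded derivation):
    (hd1 : d 1 = 0)
    (hleib : ∀ (v : (Fin (m + 1) ⊕ Fin (m + 1)) → ℝ)
      (b : ExteriorAlgebra ℝ ((Fin (m + 1) ⊕ Fin (m + 1)) → ℝ)),
      d (ExteriorAlgebra.ι ℝ v * b)
        = d (ExteriorAlgebra.ι ℝ v) * b - ExteriorAlgebra.ι ℝ v * d b)
    -- the Chevalley–Eilenberg structure equations of `g_m`:
    (hdx : ∀ a : Fin (m + 1),
      d (x a) = ((1 - ((a : ℕ) : ℝ)) / m) • (x 0 * x a))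
    (hdy0 : d (y 0) = -(x 0 * y 0))
    (hdy : ∀ b : Fin (m + 1), 1 ≤ (b : ℕ) →
      d (y b) = (((b : ℕ) : ℝ) / m) • (x 0 * y b)) :
    -- `ω = Σ_α x^α ∧ y^α` is nondegenerate: `ω^{m+1} ≠ 0`
    (∑ a : Fin (m + 1), x a * y a) ^ (m + 1) ≠ 0 ∧
    -- `θ = (1/m) x^1` is closed
    d ((1 / (m : ℝ)) • x 0) = 0 ∧
    -- `dω = θ ∧ ω`
    d (∑ a : Fin (m + 1), x a * y a)
      = ((1 / (m : ℝ)) • x 0) * ∑ a : Fin (m + 1), x a * y a := by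
  have hswap : ∀ v w : (Fin (m + 1) ⊕ Fin (m + 1)) → ℝ,
      ExteriorAlgebra.ι ℝ v * ExteriorAlgebra.ι ℝ w
        = -(ExteriorAlgebra.ι ℝ w * ExteriorAlgebra.ι ℝ v) := fun v w =>
    eq_neg_of_add_eq_zero_left (ExteriorAlgebra.ι_add_mul_swap v w)
  have hxx : x 0 * x 0 = 0 := by
    rw [hx 0]; exact ExteriorAlgebra.ι_sq_zero _
  -- squares and commutation of the 2-forms `x a * y a`
  have hzsq : ∀ a, (x a * y a) * (x a * y a) = 0 := fun a =>
    aux_pair_sq (by rw [hx a]; exact ExteriorAlgebra.ι_sq_zero _)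
      (by rw [hx a, hy a]; exact hswap _ _)
  have hzcomm : ∀ a b, Commute (x a * y a) (x b * y b) := fun a b =>
    aux_pair_comm (by rw [hx a, hx b]; exact hswap _ _)
      (by rw [hx a, hy b]; exact hswap _ _)
      (by rw [hy a, hx b]; exact hswap _ _)
      (by rw [hy a, hy b]; exact hswap _ _)
  refine ⟨?_, ?_, ?_⟩
  · -- nondegeneracy
    set L := List.ofFn (fun a : Fin (m + 1) => x a * y a) with hLdef
    have hmemsq : ∀ c ∈ L, c * c = 0 := by
      intro c hc
      obtain ⟨a, rfl⟩ := (List.mem_ofFn).mp hc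
      exact hzsq a
    have hmemcomm : ∀ c ∈ L, ∀ e ∈ L, Commute c e := by
      intro c hc e he
      obtain ⟨a, rfl⟩ := (List.mem_ofFn).mp hc
      obtain ⟨b, rfl⟩ := (List.mem_ofFn).mp he
      exact hzcomm a b
    have hpow : (∑ a : Fin (m + 1), x a * y a) ^ (m + 1) = Nat.factorial (m + 1) • L.prod := by
      have h1 := aux_sum_pow_fact L hmemsq hmemcomm
      rw [hLdef, Fin.sum_ofFn, List.length_ofFn] at h1
      rw [h1, hLdef]
    -- realize `L` as a mapped list of pairs of basis vectors
    set P : Fin (m + 1) → ((Fin (m + 1) ⊕ Fin (m + 1)) → ℝ) × ((Fin (m + 1) ⊕ Fin (m + 1)) → ℝ) :=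
      fun a => (Pi.single (Sum.inl a) 1, Pi.single (Sum.inr a) 1) with hPdef
    have hPinj : Function.Injective P := by
      intro a b hab
      by_contra hne
      have h1 := congrFun (congrArg Prod.fst hab) (Sum.inl a)
      rw [hPdef] at h1
      simp only [Pi.single_eq_same] at h1
      rw [Pi.single_eq_of_ne (Sum.inl_injective.ne hne)] at h1
      exact one_ne_zero h1
    have hLp_nodup : ((List.finRange (m + 1)).map P).Nodup :=
      (List.nodup_finRange _).map hPinj
    have Hsuf : ∀ (p : ((Fin (m + 1) ⊕ Fin (m + 1)) → ℝ) × ((Fin (m + 1) ⊕ Fin (m + 1)) → ℝ))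
        (t : List _), p :: t <:+ (List.finRange (m + 1)).map P →
        ∃ ε η : Module.Dual ℝ ((Fin (m + 1) ⊕ Fin (m + 1)) → ℝ),
          ε p.1 = 1 ∧ ε p.2 = 0 ∧ η p.2 = 1 ∧
          ∀ q ∈ t, ε q.1 = 0 ∧ ε q.2 = 0 ∧ η q.1 = 0 ∧ η q.2 = 0 := by
      intro p t hsuf
      obtain ⟨a, -, rfl⟩ := List.mem_map.mp (hsuf.subset (List.mem_cons_self))
      refine ⟨LinearMap.proj (Sum.inl a), LinearMap.proj (Sum.inr a), ?_, ?_, ?_, ?_⟩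
      · simp [hPdef]
      · simp [hPdef, Pi.single_apply]
      · simp [hPdef]
      · intro q hq
        obtain ⟨b, -, rfl⟩ := List.mem_map.mp (hsuf.subset (List.mem_cons_of_mem _ hq))
        have hnd : (P a :: t).Nodup := hLp_nodup.sublist hsuf.sublist
        have hab : ¬ (a = b) := by
          rintro rfl
          exact (List.nodup_cons.mp hnd).1 hq
        refine ⟨?_, ?_, ?_, ?_⟩ <;>
          simp [hPdef, Pi.single_apply, hab]
    have hfun : (fun a : Fin (m + 1) => x a * y a)
        = ((fun p : ((Fin (m + 1) ⊕ Fin (m + 1)) → ℝ) × ((Fin (m + 1) ⊕ Fin (m + 1)) → ℝ) =>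
            ExteriorAlgebra.ι ℝ p.1 * ExteriorAlgebra.ι ℝ p.2) ∘ P) := by
      funext a
      simp only [Function.comp_apply, hPdef]
      rw [hx a, hy a]
    have hL : L = ((List.finRange (m + 1)).map P).map
        (fun p => ExteriorAlgebra.ι ℝ p.1 * ExteriorAlgebra.ι ℝ p.2) := by
      rw [hLdef, List.ofFn_eq_map, hfun, ← List.map_map]
    have hZ : L.prod ≠ 0 := by
      rw [hL]
      exact aux_prod_pairs_ne_zero _ Hsuf
    rw [hpow]
    rw [← Nat.cast_smul_eq_nsmul ℝ]
    exact smul_ne_zero (by exact_mod_cast Nat.factorial_ne_zero (m + 1)) hZ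
  · -- closedness of θ
    rw [map_smul, hdx 0, hxx, smul_zero, smul_zero]
  · -- dω = θ ∧ ω
    have key : ∀ a : Fin (m + 1),
        d (x a * y a) = (1 / (m : ℝ)) • (x 0 * (x a * y a)) := by
      intro a
      have hleib' : d (x a * y a) = d (x a) * y a - x a * d (y a) := by
        rw [hx a, hleib, ← hx a]
      by_cases ha : (a : ℕ) = 0
      · have ha0 : a = 0 := Fin.ext (by simpa using ha)
        subst ha0
        simp only [hleib', hdx 0, hdy0, hxx, smul_zero, zero_mul, mul_neg, sub_neg_eq_add,
          zero_add, ← mul_assoc, neg_zero, sub_self]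
      · have ha1 : 1 ≤ (a : ℕ) := Nat.one_le_iff_ne_zero.mpr ha
        have hswapax : x a * x 0 = -(x 0 * x a) := by
          rw [hx a, hx 0]; exact hswap _ _
        have h2 : x a * (x 0 * y a) = -(x 0 * x a * y a) := by
          rw [← mul_assoc, hswapax, neg_mul]
        rw [hleib', hdx a, hdy a ha1, mul_smul_comm, h2, smul_neg, sub_neg_eq_add,
          smul_mul_assoc, ← mul_assoc, ← add_smul, ← add_div, sub_add_cancel]
    rw [map_sum]
    calc ∑ a : Fin (m + 1), d (x a * y a)
        = ∑ a : Fin (m + 1), (1 / (m : ℝ)) • (x 0 * (x a * y a)) :=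
          Finset.sum_congr rfl fun a _ => key a
      _ = (1 / (m : ℝ)) • (x 0 * ∑ a : Fin (m + 1), x a * y a) := by
          rw [Finset.mul_sum, Finset.smul_sum]
      _ = ((1 / (m : ℝ)) • x 0) * ∑ a : Fin (m + 1), x a * y a := by
          rw [smul_mul_assoc]
end

section
/- For each integer m ≥ 2, consider the Lie algebra g_m = ℝ ⋉_A ℝ^{2m+1} as above with dual basis (x^1,…,x^{m+1}, y^1,…,y^{m+1}), and the almost complex structure J determined by 𝒥x^α = −y^α, 𝒥y^α = x^α for 1 ≤ α ≤ m+1. Then J is not integrable: the exterior derivative of the (1,0)-form z^2 := x^2 + i y^2 equals (i/m) x^1∧y^2 = (1/(4m))(z^1∧z^2 − z^1∧z̄^2 + z̄^1∧z^2 − z̄^1∧z̄^2), which is not contained in ⋀^{2,0} ⊕ ⋀^{1,1}; in particular its (−1,2)-component is nonzero. -/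
set_option synthInstance.maxHeartbeats 1000000
set_option maxHeartbeats 1000000

noncomputable section

/-- the degree-2 functional on the small exterior algebra -/
def fdet : ∀ i : ℕ, (Fin 2 → ℂ) [⋀^Fin i]→ₗ[ℂ] ℂ
  | 2 => Matrix.detRowAlternating
  | _ => 0

lemma fdet_two : fdet 2 = Matrix.detRowAlternating := rfl

lemma liftAlternating_pair (p q : Fin 2 → ℂ) :
    ExteriorAlgebra.liftAlternating fdet
      (ExteriorAlgebra.ι ℂ p * ExteriorAlgebra.ι ℂ q) = p 0 * q 1 - p 1 * q 0 := by
  rw [ExteriorAlgebra.liftAlternating_ι_mul, ExteriorAlgebra.liftAlternating_ι,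
    AlternatingMap.curryLeft_apply_apply]
  show Matrix.detRowAlternating (Matrix.vecCons p ![q]) = _
  have : Matrix.detRowAlternating (Matrix.vecCons p ![q])
      = Matrix.det (Matrix.of ![p, q]) := rfl
  rw [this, Matrix.det_fin_two]
  simp

/-- the map `V → ℂ²`, `v ↦ (v(inl 0) + i v(inr 0), v(inl 1) + i v(inr 1))` -/
def Lmap (k : ℕ) : ((Fin (k + 3) ⊕ Fin (k + 3)) → ℂ) →ₗ[ℂ] (Fin 2 → ℂ) :=
  LinearMap.pi (fun j =>
    LinearMap.proj (Sum.inl (Fin.castLE (by omega) j)) +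
      Complex.I • LinearMap.proj (Sum.inr (Fin.castLE (by omega) j)))

lemma Lmap_apply (k : ℕ) (v : (Fin (k + 3) ⊕ Fin (k + 3)) → ℂ) (j : Fin 2) :
    Lmap k v j = v (Sum.inl (Fin.castLE (by omega) j))
      + Complex.I * v (Sum.inr (Fin.castLE (by omega) j)) := rfl

lemma Lmap_u (k : ℕ) (a : Fin (k + 3)) :
    Lmap k ((Pi.single (Sum.inl a) 1 : (Fin (k + 3) ⊕ Fin (k + 3)) → ℂ) + Complex.I • (Pi.single (Sum.inr a) 1 : (Fin (k + 3) ⊕ Fin (k + 3)) → ℂ)) = 0 := by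
  funext j
  rw [Lmap_apply]
  simp only [Pi.add_apply, Pi.smul_apply, Pi.single_apply, smul_eq_mul]
  by_cases h : Fin.castLE (by omega : 2 ≤ k + 3) j = a <;>
    simp [h, Complex.I_mul_I]

lemma Lmap_v (k : ℕ) (a : Fin (k + 3)) (j : Fin 2)
    (h : Fin.castLE (by omega : 2 ≤ k + 3) j = a) :
    Lmap k ((Pi.single (Sum.inl a) 1 : (Fin (k + 3) ⊕ Fin (k + 3)) → ℂ) - Complex.I • (Pi.single (Sum.inr a) 1 : (Fin (k + 3) ⊕ Fin (k + 3)) → ℂ)) j = 2 := by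
  rw [Lmap_apply]
  simp only [Pi.sub_apply, Pi.smul_apply, Pi.single_apply, smul_eq_mul]
  simp [h, Complex.I_mul_I]; ring

lemma Lmap_v' (k : ℕ) (a : Fin (k + 3)) (j : Fin 2)
    (h : Fin.castLE (by omega : 2 ≤ k + 3) j ≠ a) :
    Lmap k ((Pi.single (Sum.inl a) 1 : (Fin (k + 3) ⊕ Fin (k + 3)) → ℂ) - Complex.I • (Pi.single (Sum.inr a) 1 : (Fin (k + 3) ⊕ Fin (k + 3)) → ℂ)) j = 0 := by
  rw [Lmap_apply]
  simp only [Pi.sub_apply, Pi.smul_apply, Pi.single_apply, smul_eq_mul]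
  simp [h]

/-- algebra map from the big exterior algebra to the small one -/
def phi (k : ℕ) :
    ExteriorAlgebra ℂ ((Fin (k + 3) ⊕ Fin (k + 3)) → ℂ) →ₐ[ℂ] ExteriorAlgebra ℂ (Fin 2 → ℂ) :=
  ExteriorAlgebra.lift ℂ ⟨(ExteriorAlgebra.ι ℂ).comp (Lmap k), fun v => by
    simp [ExteriorAlgebra.ι_sq_zero]⟩

lemma phi_ι (k : ℕ) (v : (Fin (k + 3) ⊕ Fin (k + 3)) → ℂ) :
    phi k (ExteriorAlgebra.ι ℂ v) = ExteriorAlgebra.ι ℂ (Lmap k v) := by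
  rw [phi, ExteriorAlgebra.lift_ι_apply]; rfl

end

noncomputable def Gmap (k : ℕ) :
    ExteriorAlgebra ℂ ((Fin (k + 3) ⊕ Fin (k + 3)) → ℂ) →ₗ[ℂ] ℂ :=
  (ExteriorAlgebra.liftAlternating fdet).comp (phi k).toLinearMap

lemma Gmap_apply (k : ℕ) (w : ExteriorAlgebra ℂ ((Fin (k + 3) ⊕ Fin (k + 3)) → ℂ)) :
    Gmap k w = ExteriorAlgebra.liftAlternating fdet (phi k w) := rfl

lemma castLE_zero (k : ℕ) : (Fin.castLE (by omega : 2 ≤ k + 3) (0 : Fin 2)) = (0 : Fin (k + 3)) := by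
  ext; simp

lemma castLE_one (k : ℕ) : (Fin.castLE (by omega : 2 ≤ k + 3) (1 : Fin 2)) = (1 : Fin (k + 3)) := by
  ext; simp [Fin.val_one]

/-!
STATEMENT 16: for each `m ≥ 2`, the almost complex structure `J` on
`g_m = ℝ ⋉_A ℝ^{2m+1}` determined by `𝒥x^α = -y^α`, `𝒥y^α = x^α` — i.e. the
one whose `(1,0)`-forms are spanned by `z^α = x^α + i y^α` — is not
integrable: the Chevalley–Eilenberg differential of the `(1,0)`-form
`z^2 = x^2 + i y^2` equals `(i/m) x^1 ∧ y^2
= (1/(4m))(z^1∧z^2 - z^1∧z̄^2 + z̄^1∧z^2 - z̄^1∧z̄^2)`, which is not contained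
in `⋀^{2,0} ⊕ ⋀^{1,1}` (the span of the products `z^a ∧ z^b` and
`z^a ∧ z̄^b`); in particular its `(-1,2)`-component (the `z̄∧z̄`-part) is
nonzero.

The complexified exterior algebra `⋀^•(g_m^* ⊗ ℂ)` is realized as
`ExteriorAlgebra ℂ V` with `V = (Fin (m+1) ⊕ Fin (m+1)) → ℂ`, and the
(complexified) Chevalley–Eilenberg differential `d` is axiomatized by its
values on the generators, exactly as in Statement 15. -/
theorem solvmanifold_not_integrable (m : ℕ) (hm : 2 ≤ m)
    (d : ExteriorAlgebra ℂ ((Fin (m + 1) ⊕ Fin (m + 1)) → ℂ) →ₗ[ℂ]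
         ExteriorAlgebra ℂ ((Fin (m + 1) ⊕ Fin (m + 1)) → ℂ))
    -- the generators `x^α`, `y^β` of `g_m^* ⊗ ℂ`
    (x y : Fin (m + 1) → ExteriorAlgebra ℂ ((Fin (m + 1) ⊕ Fin (m + 1)) → ℂ))
    (hx : ∀ a, x a = ExteriorAlgebra.ι ℂ (Pi.single (Sum.inl a) 1))
    (hy : ∀ b, y b = ExteriorAlgebra.ι ℂ (Pi.single (Sum.inr b) 1))
    -- the `(1,0)`-forms `z^α = x^α + i y^α` and `(0,1)`-forms `z̄^α = x^α - i y^α`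
    (z zb : Fin (m + 1) → ExteriorAlgebra ℂ ((Fin (m + 1) ⊕ Fin (m + 1)) → ℂ))
    (hz : ∀ a, z a = x a + Complex.I • y a)
    (hzb : ∀ a, zb a = x a - Complex.I • y a)
    -- `d` is an antiderivation:
    (hd1 : d 1 = 0)
    (hleib : ∀ (v : (Fin (m + 1) ⊕ Fin (m + 1)) → ℂ)
      (b : ExteriorAlgebra ℂ ((Fin (m + 1) ⊕ Fin (m + 1)) → ℂ)),
      d (ExteriorAlgebra.ι ℂ v * b)
        = d (ExteriorAlgebra.ι ℂ v) * b - ExteriorAlgebra.ι ℂ v * d b)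
    -- the Chevalley–Eilenberg structure equations of `g_m`:
    (hdx : ∀ a : Fin (m + 1),
      d (x a) = (((1 - ((a : ℕ) : ℝ)) / m : ℝ) : ℂ) • (x 0 * x a))
    (hdy0 : d (y 0) = -(x 0 * y 0))
    (hdy : ∀ b : Fin (m + 1), 1 ≤ (b : ℕ) →
      d (y b) = ((((b : ℕ) : ℝ) / m : ℝ) : ℂ) • (x 0 * y b)) :
    -- `dz^2 = (i/m) x^1 ∧ y^2`
    d (z 1) = (Complex.I / m) • (x 0 * y 1) ∧
    -- `dz^2 = (1/(4m)) (z^1 z^2 - z^1 z̄^2 + z̄^1 z^2 - z̄^1 z̄^2)`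
    d (z 1) = ((1 : ℂ) / (4 * m)) •
      (z 0 * z 1 - z 0 * zb 1 + zb 0 * z 1 - zb 0 * zb 1) ∧
    -- `dz^2` is not contained in `⋀^{2,0} ⊕ ⋀^{1,1}`, so `J` is not integrable
    d (z 1) ∉ Submodule.span ℂ
      ({w | ∃ a b, w = z a * z b} ∪ {w | ∃ a b, w = z a * zb b}) ∧
    -- in particular the `(-1,2)`-component of `dz^2` is nonzero:
    d (z 1) + ((1 : ℂ) / (4 * m)) • (zb 0 * zb 1) ∈ Submodule.span ℂ
      ({w | ∃ a b, w = z a * z b} ∪ {w | ∃ a b, w = z a * zb b}) ∧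
    ((1 : ℂ) / (4 * m)) • (zb 0 * zb 1) ≠ 0 := by
  obtain ⟨k, rfl⟩ : ∃ k, m = k + 2 := ⟨m - 2, by omega⟩
  have hval1 : ((1 : Fin (k + 2 + 1)) : ℕ) = 1 := Fin.val_one _
  have hmC : ((k + 2 : ℕ) : ℂ) ≠ 0 := by exact_mod_cast (by omega : (k + 2 : ℕ) ≠ 0)
  -- part 1
  have hdx1 : d (x 1) = 0 := by
    rw [hdx 1, hval1]
    norm_num
  have hdy1 : d (y 1) = ((((1 : ℕ) : ℝ) / (k + 2 : ℕ) : ℝ) : ℂ) • (x 0 * y 1) := by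
    rw [hdy 1 (by rw [hval1]), hval1]
  have part1 : d (z 1) = (Complex.I / ((k + 2 : ℕ) : ℂ)) • (x 0 * y 1) := by
    rw [hz, map_add, map_smul, hdx1, hdy1, zero_add, smul_smul]
    congr 1
    push_cast
    field_simp
  -- ι-forms of z and zb
  have hzι : ∀ a, z a = ExteriorAlgebra.ι ℂ
      ((Pi.single (Sum.inl a) 1 : (Fin (k + 3) ⊕ Fin (k + 3)) → ℂ)
        + Complex.I • (Pi.single (Sum.inr a) 1 : (Fin (k + 3) ⊕ Fin (k + 3)) → ℂ)) := by
    intro a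
    rw [hz, hx, hy, map_add, map_smul]
  have hzbι : ∀ a, zb a = ExteriorAlgebra.ι ℂ
      ((Pi.single (Sum.inl a) 1 : (Fin (k + 3) ⊕ Fin (k + 3)) → ℂ)
        - Complex.I • (Pi.single (Sum.inr a) 1 : (Fin (k + 3) ⊕ Fin (k + 3)) → ℂ)) := by
    intro a
    rw [hzb, hx, hy, map_sub, map_smul]
  -- part 2
  have part2 : d (z 1) = ((1 : ℂ) / (4 * (k + 2 : ℕ))) •
      (z 0 * z 1 - z 0 * zb 1 + zb 0 * z 1 - zb 0 * zb 1) := by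
    have e1 : z 0 * z 1 - z 0 * zb 1 + zb 0 * z 1 - zb 0 * zb 1
        = (z 0 + zb 0) * (z 1 - zb 1) := by
      rw [add_mul, mul_sub, mul_sub]; abel
    have e2 : z 0 + zb 0 = (2 : ℂ) • x 0 := by
      rw [hz, hzb]; module
    have e3 : z 1 - zb 1 = ((2 : ℂ) * Complex.I) • y 1 := by
      rw [hz, hzb]; module
    rw [part1, e1, e2, e3, smul_mul_assoc, mul_smul_comm, smul_smul, smul_smul]
    congr 1
    have h1 : ((2 : ℂ) + (k : ℂ)) ≠ 0 := by
      have : ((2 : ℂ) + (k : ℂ)) = ((k + 2 : ℕ) : ℂ) := by push_cast; ring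
      rw [this]; exact hmC
    field_simp
    have h4 : ((k : ℂ) + 2) ≠ 0 := by rw [add_comm]; exact h1
    ring
  -- the functional kills every z a
  have hphiz : ∀ a, phi k (z a) = 0 := by
    intro a
    rw [hzι a, phi_ι, Lmap_u, map_zero]
  have hGgen : ∀ w ∈ ({w | ∃ a b, w = z a * z b} ∪ {w | ∃ a b, w = z a * zb b} :
      Set (ExteriorAlgebra ℂ ((Fin (k + 2 + 1) ⊕ Fin (k + 2 + 1)) → ℂ))), Gmap k w = 0 := by
    rintro w (⟨a, b, rfl⟩ | ⟨a, b, rfl⟩) <;>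
      rw [Gmap_apply, map_mul, hphiz a, zero_mul, map_zero]
  have hGspan : ∀ w ∈ Submodule.span ℂ
      ({w | ∃ a b, w = z a * z b} ∪ {w | ∃ a b, w = z a * zb b}), Gmap k w = 0 := by
    intro w hw
    have : Submodule.span ℂ
        ({w | ∃ a b, w = z a * z b} ∪ {w | ∃ a b, w = z a * zb b}) ≤
        LinearMap.ker (Gmap k) := Submodule.span_le.2 (fun v hv => hGgen v hv)
    exact this hw
  -- G (zb 0 * zb 1) = 4
  have hGbb : Gmap k (zb 0 * zb 1) = 4 := by
    rw [Gmap_apply, map_mul, hzbι 0, hzbι 1, phi_ι, phi_ι, liftAlternating_pair]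
    rw [Lmap_v k 0 0 (castLE_zero k), Lmap_v k 1 1 (castLE_one k),
      Lmap_v' k 0 1 (by rw [castLE_one k]; intro h; exact one_ne_zero h),
      Lmap_v' k 1 0 (by rw [castLE_zero k]; intro h; exact zero_ne_one h)]
    norm_num
  -- part 4
  have hanti : zb 0 * z 1 = -(z 1 * zb 0) := by
    rw [hzι, hzbι, eq_neg_of_add_eq_zero_left (ExteriorAlgebra.ι_add_mul_swap _ _)]
  have mem4 : d (z 1) + ((1 : ℂ) / (4 * (k + 2 : ℕ))) • (zb 0 * zb 1) ∈ Submodule.span ℂ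
      ({w | ∃ a b, w = z a * z b} ∪ {w | ∃ a b, w = z a * zb b}) := by
    have key : d (z 1) + ((1 : ℂ) / (4 * (k + 2 : ℕ))) • (zb 0 * zb 1)
        = ((1 : ℂ) / (4 * (k + 2 : ℕ))) • (z 0 * z 1 - z 0 * zb 1 + zb 0 * z 1) := by
      rw [part2, ← smul_add]
      congr 1
      abel
    rw [key]
    refine Submodule.smul_mem _ _ ?_
    refine add_mem (sub_mem ?_ ?_) ?_
    · exact Submodule.subset_span (Or.inl ⟨0, 1, rfl⟩)
    · exact Submodule.subset_span (Or.inr ⟨0, 1, rfl⟩)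
    · rw [hanti]
      exact neg_mem (Submodule.subset_span (Or.inr ⟨1, 0, rfl⟩))
  -- part 5
  have hcoef : ((1 : ℂ) / (4 * (k + 2 : ℕ))) ≠ 0 :=
    one_div_ne_zero (mul_ne_zero (by norm_num) hmC)
  have part5 : ((1 : ℂ) / (4 * (k + 2 : ℕ))) • (zb 0 * zb 1) ≠ 0 := by
    intro h
    have := congrArg (Gmap k) h
    rw [map_smul, hGbb, map_zero, smul_eq_mul] at this
    exact (mul_ne_zero hcoef (by norm_num : (4 : ℂ) ≠ 0)) this
  -- part 3
  have part3 : d (z 1) ∉ Submodule.span ℂ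
      ({w | ∃ a b, w = z a * z b} ∪ {w | ∃ a b, w = z a * zb b}) := by
    intro hmem
    have hdiff : ((1 : ℂ) / (4 * (k + 2 : ℕ))) • (zb 0 * zb 1) ∈ Submodule.span ℂ
        ({w | ∃ a b, w = z a * z b} ∪ {w | ∃ a b, w = z a * zb b}) := by
      have := Submodule.sub_mem _ mem4 hmem
      simpa using this
    have := hGspan _ hdiff
    rw [map_smul, hGbb, smul_eq_mul] at this
    exact (mul_ne_zero hcoef (by norm_num : (4 : ℂ) ≠ 0)) this
  exact ⟨part1, part2, part3, mem4, part5⟩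
end

section
/- For each integer m ≥ 2, k ∈ ℝ, and 0 ≤ j ≤ 2m+2, consider the twisted complex (⋀^•(g_m^* ⊗ ℂ), d_k) of the Lie algebra g_m = ℝ ⋉_A ℝ^{2m+1} as above with the inner product making the monomial basis orthonormal. Let A^j_k be the span of the weight-k monomials in B^j and let Â^j_k be the span of the monomials γ ∈ B^j with W(γ) ≠ k and x^1∧γ ≠ 0. Then there is an orthogonal direct sum decomposition ⋀^j = A^j_k ⊕ x^1∧Â^{j−1}_k ⊕ Â^j_k, and moreover ker(Δ_k) ∩ ⋀^j = A^j_k, d_k(⋀^{j−1}) = x^1∧Â^{j−1}_k, and d_k^*(⋀^{j+1}) = Â^j_k, where Δ_k = d_k d_k^* + d_k^* d_k. -/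
set_option synthInstance.maxHeartbeats 1000000
set_option maxHeartbeats 1000000

/-!
STATEMENT 18: the Hodge decomposition of the twisted complex
`(⋀^•(g_m^* ⊗ ℂ), d_k)` of `g_m = ℝ ⋉_A ℝ^{2m+1}` with respect to the inner
product making the monomial basis orthonormal:
`⋀^j = A^j_k ⊕ x^1∧Â^{j-1}_k ⊕ Â^j_k` (orthogonal direct sum), with
`ker(Δ_k) ∩ ⋀^j = A^j_k`, `d_k(⋀^{j-1}) = x^1∧Â^{j-1}_k` and
`d_k^*(⋀^{j+1}) = Â^j_k`.
-/

namespace SolvCE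

/-- the complexified exterior algebra `⋀^•(g_m^* ⊗ ℂ)` of
`g_m = ℝ ⋉_A ℝ^{2m+1}` -/
abbrev Λg (m : ℕ) := ExteriorAlgebra ℂ ((Fin (m + 1) ⊕ Fin (m + 1)) → ℂ)

/-- the generator `x^{a+1}` (1-based: `x^1, …, x^{m+1}`) -/
noncomputable def x (m : ℕ) (a : Fin (m + 1)) : Λg m :=
  ExteriorAlgebra.ι ℂ (Pi.single (Sum.inl a) 1)

/-- the generator `y^{b+1}` (1-based: `y^1, …, y^{m+1}`) -/
noncomputable def y (m : ℕ) (b : Fin (m + 1)) : Λg m :=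
  ExteriorAlgebra.ι ℂ (Pi.single (Sum.inr b) 1)

/-- the weight of `x^{a+1}`: `W(x^1) = W(x^2) = 0`, `W(x^α) = -(α-2)` for
`α ≥ 3` -/
def wx (m : ℕ) (a : Fin (m + 1)) : ℝ :=
  if (a : ℕ) ≤ 1 then 0 else -(((a : ℕ) : ℝ) - 1)

/-- the weight of `y^{b+1}`: `W(y^1) = -m`, `W(y^β) = β - 1` for `β ≥ 2` -/
def wy (m : ℕ) (b : Fin (m + 1)) : ℝ :=
  if (b : ℕ) = 0 then -(m : ℝ) else ((b : ℕ) : ℝ)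

/-- the weight of a wedge monomial, extended additively -/
def W (m : ℕ) (as bs : List (Fin (m + 1))) : ℝ :=
  (as.map (wx m)).sum + (bs.map (wy m)).sum

/-- the wedge monomial `x^{α₁} ∧ ⋯ ∧ x^{αₚ} ∧ y^{β₁} ∧ ⋯ ∧ y^{β_q}` -/
noncomputable def mono (m : ℕ) (as bs : List (Fin (m + 1))) : Λg m :=
  (as.map (x m)).prod * (bs.map (y m)).prod

/-- the space `⋀^j` of `j`-forms, the span of the degree-`j` monomials of the
monomial basis `B^j` -/
noncomputable def deg (m : ℕ) (j : ℤ) : Submodule ℂ (Λg m) :=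
  Submodule.span ℂ {γ | ∃ as bs : List (Fin (m + 1)),
    as.Pairwise (· < ·) ∧ bs.Pairwise (· < ·) ∧
    ((as.length : ℤ) + bs.length = j) ∧ γ = mono m as bs}

/-- the space `A^j_k`, the span of the weight-`k` monomials in `B^j` -/
noncomputable def Aw (m : ℕ) (j : ℤ) (k : ℝ) : Submodule ℂ (Λg m) :=
  Submodule.span ℂ {γ | ∃ as bs : List (Fin (m + 1)),
    as.Pairwise (· < ·) ∧ bs.Pairwise (· < ·) ∧
    ((as.length : ℤ) + bs.length = j) ∧ W m as bs = k ∧ γ = mono m as bs}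

/-- the space `Â^j_k`, the span of the monomials `γ ∈ B^j` with `W(γ) ≠ k`
and `x^1 ∧ γ ≠ 0` -/
noncomputable def Ahat (m : ℕ) (j : ℤ) (k : ℝ) : Submodule ℂ (Λg m) :=
  Submodule.span ℂ {γ | ∃ as bs : List (Fin (m + 1)),
    as.Pairwise (· < ·) ∧ bs.Pairwise (· < ·) ∧
    ((as.length : ℤ) + bs.length = j) ∧ W m as bs ≠ k ∧
    x m 0 * mono m as bs ≠ 0 ∧ γ = mono m as bs}

end SolvCE

namespace SolvHodge
open SolvCE

variable {m : ℕ}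

lemma iota_swap (v w : (Fin (m + 1) ⊕ Fin (m + 1)) → ℂ) :
    ExteriorAlgebra.ι ℂ v * ExteriorAlgebra.ι ℂ w
      = -(ExteriorAlgebra.ι ℂ w * ExteriorAlgebra.ι ℂ v) :=
  eq_neg_of_add_eq_zero_left (ExteriorAlgebra.ι_add_mul_swap v w)

lemma x_mul_x_self (a : Fin (m + 1)) : x m a * x m a = 0 :=
  ExteriorAlgebra.ι_sq_zero _

lemma x_swap (a b : Fin (m + 1)) : x m a * x m b = -(x m b * x m a) := iota_swap _ _

lemma y_mul_y_self (b : Fin (m + 1)) : y m b * y m b = 0 :=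
  ExteriorAlgebra.ι_sq_zero _

lemma y_swap (a b : Fin (m + 1)) : y m a * y m b = -(y m b * y m a) := iota_swap _ _

lemma iota_comm_list (L : List (Λg m)) (hL : ∀ z ∈ L, ∃ v, z = ExteriorAlgebra.ι ℂ v)
    (v : (Fin (m + 1) ⊕ Fin (m + 1)) → ℂ) :
    ExteriorAlgebra.ι ℂ v * L.prod = ((-1 : ℂ) ^ L.length) • (L.prod * ExteriorAlgebra.ι ℂ v) := by
  induction L with
  | nil => simp
  | cons h t ih =>
    obtain ⟨w, rfl⟩ := hL h (by simp)
    have ht := ih (fun z hz => hL z (by simp [hz]))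
    rw [List.prod_cons, ← mul_assoc, iota_swap v w, neg_mul, mul_assoc, ht]
    rw [mul_smul_comm, List.length_cons, pow_succ, mul_comm ((-1:ℂ)^t.length) (-1),
      ← smul_smul, neg_one_smul, ← mul_assoc]

/-- the data of the theorem, bundled -/
structure Setup (m : ℕ) where
  hm : 2 ≤ m
  d : Λg m →ₗ[ℂ] Λg m
  hd1 : d 1 = 0
  hleib : ∀ (v : (Fin (m + 1) ⊕ Fin (m + 1)) → ℂ) (b : Λg m),
    d (ExteriorAlgebra.ι ℂ v * b)
      = d (ExteriorAlgebra.ι ℂ v) * b - ExteriorAlgebra.ι ℂ v * d b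
  hdx : ∀ a : Fin (m + 1),
    d (x m a) = (((1 - ((a : ℕ) : ℝ)) / m : ℝ) : ℂ) • (x m 0 * x m a)
  hdy0 : d (y m 0) = -(x m 0 * y m 0)
  hdy : ∀ b : Fin (m + 1), 1 ≤ (b : ℕ) →
    d (y m b) = ((((b : ℕ) : ℝ) / m : ℝ) : ℂ) • (x m 0 * y m b)
  ip : Λg m → Λg m → ℂ
  ip_addl : ∀ a b c, ip (a + b) c = ip a c + ip b c
  ip_addr : ∀ a b c, ip a (b + c) = ip a b + ip a c
  ip_smull : ∀ (μ : ℂ) a b, ip (μ • a) b = starRingEnd ℂ μ * ip a b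
  ip_smulr : ∀ (μ : ℂ) a b, ip a (μ • b) = μ * ip a b
  ip_ortho : ∀ as bs cs ds : List (Fin (m + 1)),
    as.Pairwise (· < ·) → bs.Pairwise (· < ·) →
    cs.Pairwise (· < ·) → ds.Pairwise (· < ·) →
    ip (mono m as bs) (mono m cs ds) = if as = cs ∧ bs = ds then 1 else 0
  dstar : ℝ → Λg m →ₗ[ℂ] Λg m
  hadj : ∀ (k : ℝ) (a b : Λg m),
    ip (dstar k a) b
      = ip a ((d - (k : ℂ) • LinearMap.mulLeft ℂ ((1 / (m : ℂ)) • x m 0)) b)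

namespace Setup

variable (S : Setup m)

lemma hm0 (S : Setup m) : (m : ℝ) ≠ 0 := by
  have := S.hm; positivity

/-- combined generators -/
noncomputable def g (i : Fin (m + 1) ⊕ Fin (m + 1)) : Λg m := Sum.elim (x m) (y m) i

def wI (i : Fin (m + 1) ⊕ Fin (m + 1)) : ℝ := Sum.elim (wx m) (wy m) i

lemma g_iota (i : Fin (m + 1) ⊕ Fin (m + 1)) :
    ∃ v, (g i : Λg m) = ExteriorAlgebra.ι ℂ v := by
  cases i <;> exact ⟨_, rfl⟩

lemma mono_eq_prod (as bs : List (Fin (m + 1))) :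
    mono m as bs = ((as.map Sum.inl ++ bs.map Sum.inr).map (g (m := m))).prod := by
  simp [mono, g, List.map_map, Function.comp_def]

lemma W_eq_sum (as bs : List (Fin (m + 1))) :
    W m as bs = ((as.map Sum.inl ++ bs.map Sum.inr).map (wI (m := m))).sum := by
  simp [W, wI, List.map_map, Function.comp_def]

lemma d_x (S : Setup m) (a : Fin (m + 1)) :
    S.d (x m a) = ((wx m a / m : ℝ) : ℂ) • (x m 0 * x m a) := by
  rw [S.hdx a]
  rcases Nat.lt_or_ge (a : ℕ) 1 with h | h
  · have ha : (a : ℕ) = 0 := by omega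
    have : a = 0 := by apply Fin.ext; simpa using ha
    subst this
    simp [wx, x_mul_x_self]
  · rcases Nat.eq_or_lt_of_le h with h1 | h2
    · have : wx m a = 0 := by simp [wx, ← h1]
      rw [this]; norm_num [← h1]
    · have : wx m a = -(((a : ℕ) : ℝ) - 1) := by rw [wx, if_neg]; omega
      rw [this]; ring_nf

lemma d_y (S : Setup m) (b : Fin (m + 1)) :
    S.d (y m b) = ((wy m b / m : ℝ) : ℂ) • (x m 0 * y m b) := by
  rcases Nat.eq_zero_or_pos (b : ℕ) with h | h
  · have : b = 0 := by apply Fin.ext; simpa using h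
    subst this
    rw [S.hdy0]
    have h1 : wy m (0 : Fin (m + 1)) = -(m : ℝ) := by simp [wy]
    rw [h1, show (-(m:ℝ)/m : ℝ) = -1 by field_simp [S.hm0]]
    norm_num
  · rw [S.hdy b h]
    have : wy m b = ((b : ℕ) : ℝ) := by rw [wy, if_neg (by omega)]
    rw [this]

lemma d_gen (S : Setup m) (i : Fin (m + 1) ⊕ Fin (m + 1)) :
    S.d (g i) = ((wI i / m : ℝ) : ℂ) • (x m 0 * g i) := by
  cases i with
  | inl a => exact S.d_x a
  | inr b => exact S.d_y b

lemma d_prod (S : Setup m) (l : List (Fin (m + 1) ⊕ Fin (m + 1))) :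
    S.d ((l.map (g (m := m))).prod)
      = (((l.map (wI (m := m))).sum / m : ℝ) : ℂ) • (x m 0 * (l.map (g (m := m))).prod) := by
  induction l with
  | nil => simp [S.hd1]
  | cons i t ih =>
    obtain ⟨v, hv⟩ := g_iota (m := m) i
    have hw : (x m 0 : Λg m) = ExteriorAlgebra.ι ℂ (Pi.single (Sum.inl 0) 1) := rfl
    have swap : (g i : Λg m) * x m 0 = -(x m 0 * g i) := by
      rw [hv, hw, iota_swap]
    rw [List.map_cons, List.prod_cons, hv, S.hleib, ← hv, S.d_gen i, ih]
    rw [smul_mul_assoc, mul_smul_comm, ← mul_assoc (g i) (x m 0), swap, neg_mul, smul_neg,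
      sub_neg_eq_add, mul_assoc (x m 0) (g i), ← mul_assoc (x m 0) (g i), ← add_smul]
    rw [mul_assoc (x m 0) (g i)]
    congr 1
    rw [List.map_cons, List.sum_cons]
    push_cast
    ring

lemma d_mono (as bs : List (Fin (m + 1))) :
    S.d (mono m as bs) = ((W m as bs / m : ℝ) : ℂ) • (x m 0 * mono m as bs) := by
  rw [mono_eq_prod, W_eq_sum, S.d_prod]


/-- the twisted differential -/
noncomputable def Dk (S : Setup m) (k : ℝ) : Λg m →ₗ[ℂ] Λg m :=
  S.d - (k : ℂ) • LinearMap.mulLeft ℂ ((1 / (m : ℂ)) • x m 0)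

lemma Dk_apply (S : Setup m) (k : ℝ) (u : Λg m) :
    S.Dk k u = S.d u - (k : ℂ) • ((1 / (m : ℂ)) • x m 0 * u) := by
  simp [Dk, LinearMap.sub_apply, LinearMap.smul_apply, LinearMap.mulLeft_apply]

lemma Dk_mono (S : Setup m) (k : ℝ) (as bs : List (Fin (m + 1))) :
    S.Dk k (mono m as bs)
      = (((W m as bs - k) / m : ℝ) : ℂ) • (x m 0 * mono m as bs) := by
  rw [Dk_apply, S.d_mono, smul_mul_assoc, smul_smul, ← sub_smul]
  congr 1
  have hm : (m : ℂ) ≠ 0 := by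
    exact_mod_cast Complex.ofReal_ne_zero.2 S.hm0
  field_simp
  push_cast
  field_simp

lemma mono_nil : mono m [] [] = 1 := by simp [mono]

lemma mono_cons (a : Fin (m + 1)) (as bs : List (Fin (m + 1))) :
    mono m (a :: as) bs = x m a * mono m as bs := by
  simp [mono, mul_assoc]

lemma sorted_zero_head {as : List (Fin (m + 1))} (hs : as.Pairwise (· < ·))
    (h : (0 : Fin (m + 1)) ∈ as) : ∃ t, as = 0 :: t := by
  cases as with
  | nil => simp at h
  | cons a t =>
    rcases List.mem_cons.1 h with h | h
    · exact ⟨t, by rw [← h]⟩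
    · exfalso
      have := (List.pairwise_cons.1 hs).1 0 h
      exact absurd this (by simp)

lemma zero_not_mem_of_sorted_tail {as : List (Fin (m + 1))}
    (hs : ((0 : Fin (m + 1)) :: as).Pairwise (· < ·)) : (0 : Fin (m + 1)) ∉ as := by
  intro h
  have := (List.pairwise_cons.1 hs).1 0 h
  simp at this

lemma sorted_cons_zero {as : List (Fin (m + 1))} (hs : as.Pairwise (· < ·))
    (h : (0 : Fin (m + 1)) ∉ as) : ((0 : Fin (m + 1)) :: as).Pairwise (· < ·) := by
  rw [List.pairwise_cons]
  exact ⟨fun b hb => Fin.pos_of_ne_zero (fun hb0 => h (hb0 ▸ hb)), hs⟩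

lemma x0_mul_mono_of_mem (as bs : List (Fin (m + 1))) (hs : as.Pairwise (· < ·))
    (h : (0 : Fin (m + 1)) ∈ as) : x m 0 * mono m as bs = 0 := by
  obtain ⟨t, rfl⟩ := sorted_zero_head hs h
  rw [mono_cons, ← mul_assoc, x_mul_x_self, zero_mul]

lemma W_cons_zero (as bs : List (Fin (m + 1))) :
    W m ((0 : Fin (m + 1)) :: as) bs = W m as bs := by
  have : wx m (0 : Fin (m + 1)) = 0 := by simp [wx]
  simp [W, this]

/-! ### inner product basics -/

lemma ip_zero_l (S : Setup m) (b : Λg m) : S.ip 0 b = 0 := by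
  have := S.ip_addl 0 0 b
  simp at this
  linear_combination this

lemma ip_zero_r (S : Setup m) (a : Λg m) : S.ip a 0 = 0 := by
  have := S.ip_addr a 0 0
  simp at this
  linear_combination this

lemma ip_neg_l (S : Setup m) (a b : Λg m) : S.ip (-a) b = -S.ip a b := by
  have : (-a : Λg m) = (-1 : ℂ) • a := by simp
  rw [this, S.ip_smull]
  simp

lemma ip_sub_l (S : Setup m) (a b c : Λg m) : S.ip (a - b) c = S.ip a c - S.ip b c := by
  rw [sub_eq_add_neg, S.ip_addl, ip_neg_l, sub_eq_add_neg]

lemma ip_sum_l (S : Setup m) {α : Type*} (s : Finset α) (f : α → Λg m) (b : Λg m) :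
    S.ip (∑ i ∈ s, f i) b = ∑ i ∈ s, S.ip (f i) b := by
  classical
  induction s using Finset.induction_on with
  | empty => simp [S.ip_zero_l]
  | insert _ _ h ih => simp [Finset.sum_insert h, S.ip_addl, ih]

lemma ip_sum_r (S : Setup m) {α : Type*} (s : Finset α) (f : α → Λg m) (a : Λg m) :
    S.ip a (∑ i ∈ s, f i) = ∑ i ∈ s, S.ip a (f i) := by
  classical
  induction s using Finset.induction_on with
  | empty => simp [S.ip_zero_r]
  | insert _ _ h ih => simp [Finset.sum_insert h, S.ip_addr, ih]

lemma mono_ne_zero (S : Setup m) {as bs : List (Fin (m + 1))}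
    (has : as.Pairwise (· < ·)) (hbs : bs.Pairwise (· < ·)) : mono m as bs ≠ 0 := by
  intro h
  have h1 := S.ip_ortho as bs as bs has hbs has hbs
  rw [if_pos ⟨rfl, rfl⟩] at h1
  rw [h, S.ip_zero_l] at h1
  exact zero_ne_one h1

lemma mono_inj (S : Setup m) {as bs cs ds : List (Fin (m + 1))}
    (has : as.Pairwise (· < ·)) (hbs : bs.Pairwise (· < ·))
    (hcs : cs.Pairwise (· < ·)) (hds : ds.Pairwise (· < ·))
    (h : mono m as bs = mono m cs ds) : as = cs ∧ bs = ds := by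
  by_contra hne
  have h1 := S.ip_ortho cs ds cs ds hcs hds hcs hds
  rw [if_pos ⟨rfl, rfl⟩] at h1
  have h2 := S.ip_ortho as bs cs ds has hbs hcs hds
  rw [if_neg hne, h] at h2
  rw [h2] at h1
  exact one_ne_zero h1.symm


/-! ### spanning by sorted monomials -/

end Setup

/-- the set of all sorted monomials -/
def SM (m : ℕ) : Set (Λg m) :=
  {γ | ∃ as bs : List (Fin (m + 1)),
    as.Pairwise (· < ·) ∧ bs.Pairwise (· < ·) ∧ γ = mono m as bs}

namespace Setup

/-- straightening a single generator into a sorted product -/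
lemma insert_gen (f : Fin (m + 1) → Λg m)
    (h0 : ∀ a, f a * f a = 0) (hsw : ∀ a b, f a * f b = -(f b * f a)) :
    ∀ (l : List (Fin (m + 1))), l.Pairwise (· < ·) → ∀ a : Fin (m + 1),
      ∃ (c : ℂ) (l' : List (Fin (m + 1))), l'.Pairwise (· < ·) ∧
        (∀ z ∈ l', z ∈ a :: l) ∧ f a * (l.map f).prod = c • (l'.map f).prod := by
  intro l
  induction l with
  | nil =>
    intro _ a
    exact ⟨1, [a], List.pairwise_singleton _ a, by simp, by simp⟩
  | cons h t ih =>
    intro hs a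
    have hts : t.Pairwise (· < ·) := (List.pairwise_cons.1 hs).2
    rcases lt_trichotomy a h with hlt | heq | hgt
    · refine ⟨1, a :: h :: t, ?_, by simp, by simp⟩
      rw [List.pairwise_cons]
      refine ⟨?_, hs⟩
      intro b hb
      rcases List.mem_cons.1 hb with hb | hb
      · exact hb ▸ hlt
      · exact lt_trans hlt ((List.pairwise_cons.1 hs).1 b hb)
    · subst heq
      refine ⟨0, [], List.Pairwise.nil, by simp, ?_⟩
      rw [List.map_cons, List.prod_cons, ← mul_assoc, h0, zero_mul, zero_smul]
    · obtain ⟨c, l', hl's, hl'mem, hl'⟩ := ih hts a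
      refine ⟨-c, h :: l', ?_, ?_, ?_⟩
      · rw [List.pairwise_cons]
        refine ⟨?_, hl's⟩
        intro b hb
        rcases List.mem_cons.1 (hl'mem b hb) with hb | hb
        · exact hb ▸ hgt
        · exact (List.pairwise_cons.1 hs).1 b hb
      · intro z hz
        rcases List.mem_cons.1 hz with hz | hz
        · simp [hz]
        · rcases List.mem_cons.1 (hl'mem z hz) with h1 | h1 <;> simp [h1]
      · rw [List.map_cons, List.prod_cons, ← mul_assoc, hsw a h, neg_mul, mul_assoc, hl',
          List.map_cons, List.prod_cons, mul_smul_comm, neg_smul]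

lemma x_mul_mem_spanSM (S : Setup m) (a : Fin (m + 1)) {u : Λg m}
    (hu : u ∈ Submodule.span ℂ (SM m)) : x m a * u ∈ Submodule.span ℂ (SM m) := by
  induction hu using Submodule.span_induction with
  | mem γ hγ =>
    obtain ⟨as, bs, has, hbs, rfl⟩ := hγ
    obtain ⟨c, l', hl's, -, hl'⟩ := insert_gen (x m) x_mul_x_self x_swap as has a
    rw [mono, ← mul_assoc, hl', smul_mul_assoc]
    exact Submodule.smul_mem _ _ (Submodule.subset_span ⟨l', bs, hl's, hbs, rfl⟩)
  | zero => rw [mul_zero]; exact Submodule.zero_mem _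
  | add u v _ _ hu hv => rw [mul_add]; exact Submodule.add_mem _ hu hv
  | smul c u _ hu => rw [mul_smul_comm]; exact Submodule.smul_mem _ _ hu

lemma y_mul_mem_spanSM (S : Setup m) (b : Fin (m + 1)) {u : Λg m}
    (hu : u ∈ Submodule.span ℂ (SM m)) : y m b * u ∈ Submodule.span ℂ (SM m) := by
  induction hu using Submodule.span_induction with
  | mem γ hγ =>
    obtain ⟨as, bs, has, hbs, rfl⟩ := hγ
    obtain ⟨c, l', hl's, -, hl'⟩ := insert_gen (y m) y_mul_y_self y_swap bs hbs b
    have hcomm : y m b * (as.map (x m)).prod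
        = ((-1 : ℂ) ^ as.length) • ((as.map (x m)).prod * y m b) := by
      have := iota_comm_list (as.map (x m))
        (fun z hz => by
          obtain ⟨a', -, rfl⟩ := List.mem_map.1 hz
          exact ⟨_, rfl⟩) (Pi.single (Sum.inr b) 1)
      simpa [y] using this
    rw [mono, ← mul_assoc, hcomm, smul_mul_assoc, mul_assoc, hl', mul_smul_comm, smul_smul]
    exact Submodule.smul_mem _ _ (Submodule.subset_span ⟨as, l', has, hl's, rfl⟩)
  | zero => rw [mul_zero]; exact Submodule.zero_mem _
  | add u v _ _ hu hv => rw [mul_add]; exact Submodule.add_mem _ hu hv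
  | smul c u _ hu => rw [mul_smul_comm]; exact Submodule.smul_mem _ _ hu

lemma iota_mul_mem_spanSM (S : Setup m) (v : (Fin (m + 1) ⊕ Fin (m + 1)) → ℂ) {u : Λg m}
    (hu : u ∈ Submodule.span ℂ (SM m)) :
    ExteriorAlgebra.ι ℂ v * u ∈ Submodule.span ℂ (SM m) := by
  have hv : v = ∑ i : Fin (m + 1) ⊕ Fin (m + 1),
      v i • (Pi.single i 1 : (Fin (m + 1) ⊕ Fin (m + 1)) → ℂ) := by
    funext j
    rw [Fintype.sum_apply]
    simp [Pi.single_apply]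
  rw [hv, map_sum, Finset.sum_mul]
  refine Submodule.sum_mem _ fun i _ => ?_
  rw [map_smul, smul_mul_assoc]
  refine Submodule.smul_mem _ _ ?_
  cases i with
  | inl a => exact S.x_mul_mem_spanSM a hu
  | inr b => exact S.y_mul_mem_spanSM b hu

lemma mem_spanSM (S : Setup m) (u : Λg m) : u ∈ Submodule.span ℂ (SM m) := by
  induction u using ExteriorAlgebra.induction with
  | algebraMap r =>
    have : (algebraMap ℂ (Λg m)) r = r • mono m [] [] := by
      rw [mono_nil, Algebra.algebraMap_eq_smul_one]
    rw [this]
    exact Submodule.smul_mem _ _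
      (Submodule.subset_span ⟨[], [], List.Pairwise.nil, List.Pairwise.nil, rfl⟩)
  | ι v =>
    rw [← mul_one (ExteriorAlgebra.ι ℂ v)]
    refine S.iota_mul_mem_spanSM v ?_
    rw [← mono_nil]
    exact Submodule.subset_span ⟨[], [], List.Pairwise.nil, List.Pairwise.nil, rfl⟩
  | mul a b ha hb =>
    induction ha using Submodule.span_induction with
    | mem γ hγ =>
      obtain ⟨as, bs, has, hbs, rfl⟩ := hγ
      rw [mono, mul_assoc]
      have h1 : (bs.map (y m)).prod * b ∈ Submodule.span ℂ (SM m) := by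
        clear has
        induction bs with
        | nil => simpa using hb
        | cons h t iht =>
          rw [List.map_cons, List.prod_cons, mul_assoc]
          exact S.y_mul_mem_spanSM h (iht (List.pairwise_cons.1 hbs).2)
      clear hbs
      induction as with
      | nil => simpa using h1
      | cons h t iht =>
        rw [List.map_cons, List.prod_cons, mul_assoc]
        exact S.x_mul_mem_spanSM h (iht (List.pairwise_cons.1 has).2)
    | zero => rw [zero_mul]; exact Submodule.zero_mem _
    | add u v _ _ hu hv => rw [add_mul]; exact Submodule.add_mem _ hu hv
    | smul c u _ hu => rw [smul_mul_assoc]; exact Submodule.smul_mem _ _ hu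
  | add a b ha hb => exact Submodule.add_mem _ ha hb


/-! ### nondegeneracy of `ip` -/

lemma ip_finsupp (S : Setup m) (c : Λg m →₀ ℂ) (hsupp : (c.support : Set (Λg m)) ⊆ SM m)
    (cs ds : List (Fin (m + 1))) (hcs : cs.Pairwise (· < ·)) (hds : ds.Pairwise (· < ·)) :
    S.ip (c.sum fun γ r => r • γ) (mono m cs ds) = starRingEnd ℂ (c (mono m cs ds)) := by
  classical
  rw [Finsupp.sum, S.ip_sum_l]
  have key : ∀ γ ∈ c.support, γ ≠ mono m cs ds → S.ip (c γ • γ) (mono m cs ds) = 0 := by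
    intro γ hγ hne
    obtain ⟨as, bs, has, hbs, rfl⟩ := hsupp hγ
    rw [S.ip_smull, S.ip_ortho as bs cs ds has hbs hcs hds, if_neg, mul_zero]
    rintro ⟨rfl, rfl⟩
    exact hne rfl
  rw [Finset.sum_eq_single (mono m cs ds) key]
  · rw [S.ip_smull, S.ip_ortho cs ds cs ds hcs hds hcs hds, if_pos ⟨rfl, rfl⟩, mul_one]
  · intro h
    rw [Finsupp.notMem_support_iff.1 h, zero_smul, S.ip_zero_l]

lemma eq_zero_of_ip (S : Setup m) (z : Λg m)
    (h : ∀ cs ds : List (Fin (m + 1)), cs.Pairwise (· < ·) → ds.Pairwise (· < ·) →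
      S.ip z (mono m cs ds) = 0) : z = 0 := by
  obtain ⟨c, hsupp, rfl⟩ := Submodule.mem_span_set.1 (S.mem_spanSM z)
  have hc : ∀ γ ∈ c.support, c γ = 0 := by
    intro γ hγ
    obtain ⟨as, bs, has, hbs, rfl⟩ := hsupp hγ
    have := S.ip_finsupp c hsupp as bs has hbs
    rw [h as bs has hbs] at this
    have h2 : c (mono m as bs) = 0 := by
      have := congrArg (starRingEnd ℂ) this.symm
      simpa using this
    exact h2
  have : c = 0 := by
    ext γ
    by_cases hγ : γ ∈ c.support
    · exact hc γ hγ
    · exact Finsupp.notMem_support_iff.1 hγ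
  rw [this, Finsupp.sum_zero_index]

lemma eq_of_ip (S : Setup m) (u v : Λg m)
    (h : ∀ cs ds : List (Fin (m + 1)), cs.Pairwise (· < ·) → ds.Pairwise (· < ·) →
      S.ip u (mono m cs ds) = S.ip v (mono m cs ds)) : u = v := by
  have := S.eq_zero_of_ip (u - v) (fun cs ds hcs hds => by
    rw [S.ip_sub_l, h cs ds hcs hds, sub_self])
  exact sub_eq_zero.1 this

/-! ### `dstar` on monomials -/

lemma hadj' (S : Setup m) (k : ℝ) (a b : Λg m) :
    S.ip (S.dstar k a) b = S.ip a (S.Dk k b) := S.hadj k a b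

lemma dstar_mono_of_not_mem (S : Setup m) (k : ℝ) {as bs : List (Fin (m + 1))}
    (has : as.Pairwise (· < ·)) (hbs : bs.Pairwise (· < ·)) (h0 : (0 : Fin (m + 1)) ∉ as) :
    S.dstar k (mono m as bs) = 0 := by
  refine S.eq_of_ip _ _ fun cs ds hcs hds => ?_
  rw [S.hadj', S.Dk_mono, S.ip_smulr, S.ip_zero_l]
  by_cases h0c : (0 : Fin (m + 1)) ∈ cs
  · rw [x0_mul_mono_of_mem cs ds hcs h0c, S.ip_zero_r, mul_zero]
  · rw [← mono_cons, S.ip_ortho as bs (0 :: cs) ds has hbs (sorted_cons_zero hcs h0c) hds,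
      if_neg, mul_zero]
    rintro ⟨rfl, rfl⟩
    exact h0 (by simp)

lemma dstar_mono_cons_zero (S : Setup m) (k : ℝ) {as bs : List (Fin (m + 1))}
    (has : ((0 : Fin (m + 1)) :: as).Pairwise (· < ·)) (hbs : bs.Pairwise (· < ·)) :
    S.dstar k (mono m ((0 : Fin (m + 1)) :: as) bs)
      = (((W m as bs - k) / m : ℝ) : ℂ) • mono m as bs := by
  have has' : as.Pairwise (· < ·) := (List.pairwise_cons.1 has).2
  refine S.eq_of_ip _ _ fun cs ds hcs hds => ?_
  rw [S.hadj', S.Dk_mono, S.ip_smulr, S.ip_smull]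
  rw [Complex.conj_ofReal]
  by_cases h0c : (0 : Fin (m + 1)) ∈ cs
  · rw [x0_mul_mono_of_mem cs ds hcs h0c, S.ip_zero_r, mul_zero]
    rw [S.ip_ortho as bs cs ds has' hbs hcs hds, if_neg, mul_zero]
    rintro ⟨rfl, rfl⟩
    exact zero_not_mem_of_sorted_tail has h0c
  · rw [← mono_cons,
      S.ip_ortho (0 :: as) bs (0 :: cs) ds has hbs (sorted_cons_zero hcs h0c) hds,
      S.ip_ortho as bs cs ds has' hbs hcs hds]
    by_cases he : as = cs ∧ bs = ds
    · obtain ⟨rfl, rfl⟩ := he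
      rw [if_pos ⟨rfl, rfl⟩, if_pos ⟨rfl, rfl⟩]
    · rw [if_neg he, if_neg, mul_zero, mul_zero]
      rintro ⟨hc, rfl⟩
      exact he ⟨by injection hc, rfl⟩

/-! ### the Laplacian on monomials -/

noncomputable def Delta (S : Setup m) (k : ℝ) : Λg m →ₗ[ℂ] Λg m :=
  S.Dk k ∘ₗ S.dstar k + S.dstar k ∘ₗ S.Dk k

lemma Delta_mono (S : Setup m) (k : ℝ) {as bs : List (Fin (m + 1))}
    (has : as.Pairwise (· < ·)) (hbs : bs.Pairwise (· < ·)) :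
    S.Delta k (mono m as bs)
      = ((((W m as bs - k) / m) ^ 2 : ℝ) : ℂ) • mono m as bs := by
  have expand : S.Delta k (mono m as bs)
      = S.Dk k (S.dstar k (mono m as bs)) + S.dstar k (S.Dk k (mono m as bs)) := rfl
  by_cases h0 : (0 : Fin (m + 1)) ∈ as
  · obtain ⟨t, rfl⟩ := sorted_zero_head has h0
    have hts : t.Pairwise (· < ·) := (List.pairwise_cons.1 has).2
    rw [expand, S.Dk_mono, x0_mul_mono_of_mem _ bs has h0, smul_zero, map_zero, add_zero,
      S.dstar_mono_cons_zero k has hbs, map_smul, S.Dk_mono, ← mono_cons, smul_smul,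
      W_cons_zero, ← Complex.ofReal_mul]
    norm_num [pow_two]
  · rw [expand, S.dstar_mono_of_not_mem k has hbs h0, map_zero, zero_add, S.Dk_mono,
      map_smul]
    have h0' : (0 : Fin (m + 1)) ∉ as := h0
    rw [← mono_cons, S.dstar_mono_cons_zero k (sorted_cons_zero has h0') hbs, smul_smul]
    rw [← Complex.ofReal_mul]
    norm_num [pow_two]


end Setup

/-! ### spans of sets of monomials selected by a predicate on index lists -/

def TP (m : ℕ) (P : List (Fin (m + 1)) → List (Fin (m + 1)) → Prop) : Set (Λg m) :=
  {γ | ∃ as bs : List (Fin (m + 1)),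
    as.Pairwise (· < ·) ∧ bs.Pairwise (· < ·) ∧ P as bs ∧ γ = mono m as bs}

lemma TP_subset_SM {P} : TP m P ⊆ SM m := by
  rintro γ ⟨as, bs, h1, h2, _, h5⟩
  exact ⟨as, bs, h1, h2, h5⟩

namespace Setup

lemma ip_TP_orth (S : Setup m) {P Q : List (Fin (m + 1)) → List (Fin (m + 1)) → Prop}
    (hdisj : ∀ as bs, as.Pairwise (· < ·) → bs.Pairwise (· < ·) →
      P as bs → Q as bs → False) :
    ∀ u ∈ Submodule.span ℂ (TP m P), ∀ v ∈ Submodule.span ℂ (TP m Q), S.ip u v = 0 := by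
  intro u hu
  induction hu using Submodule.span_induction with
  | mem γ hγ =>
    intro v hv
    induction hv using Submodule.span_induction with
    | mem δ hδ =>
      obtain ⟨as, bs, h1, h2, hP, rfl⟩ := hγ
      obtain ⟨cs, ds, h3, h4, hQ, rfl⟩ := hδ
      rw [S.ip_ortho as bs cs ds h1 h2 h3 h4, if_neg]
      rintro ⟨rfl, rfl⟩
      exact hdisj as bs h1 h2 hP hQ
    | zero => exact S.ip_zero_r _
    | add a b _ _ hA hB => rw [S.ip_addr, hA, hB, add_zero]
    | smul r a _ hA => rw [S.ip_smulr, hA, mul_zero]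
  | zero => intro v _; exact S.ip_zero_l _
  | add a b _ _ hA hB => intro v hv; rw [S.ip_addl, hA v hv, hB v hv, add_zero]
  | smul r a _ hA => intro v hv; rw [S.ip_smull, hA v hv, mul_zero]

lemma inf_TP (S : Setup m) {P Q : List (Fin (m + 1)) → List (Fin (m + 1)) → Prop}
    (hdisj : ∀ as bs, as.Pairwise (· < ·) → bs.Pairwise (· < ·) →
      P as bs → Q as bs → False) :
    Submodule.span ℂ (TP m P) ⊓ Submodule.span ℂ (TP m Q) = ⊥ := by
  rw [eq_bot_iff]
  rintro u ⟨huP, huQ⟩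
  obtain ⟨c, hsupp, rfl⟩ := Submodule.mem_span_set.1 huP
  have hsupp' : (c.support : Set (Λg m)) ⊆ SM m := fun γ hγ => TP_subset_SM (hsupp hγ)
  rw [Submodule.mem_bot]
  have hc : ∀ γ ∈ c.support, c γ = 0 := by
    intro γ hγ
    obtain ⟨as, bs, h1, h2, hP, rfl⟩ := hsupp hγ
    have e1 := S.ip_finsupp c hsupp' as bs h1 h2
    have e2 : S.ip (c.sum fun γ r => r • γ) (mono m as bs) = 0 :=
      S.ip_TP_orth (fun as bs s1 s2 hq hp => hdisj as bs s1 s2 hp hq) _ huQ _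
        (Submodule.subset_span ⟨as, bs, h1, h2, hP, rfl⟩)
    rw [e2] at e1
    have := congrArg (starRingEnd ℂ) e1
    simpa using this.symm
  have : c = 0 := by
    ext γ
    by_cases hγ : γ ∈ c.support
    · exact hc γ hγ
    · exact Finsupp.notMem_support_iff.1 hγ
  rw [this, Finsupp.sum_zero_index]

end Setup

/-! ### the four predicates -/

def PD (m : ℕ) (j : ℤ) (as bs : List (Fin (m + 1))) : Prop :=
  (as.length : ℤ) + bs.length = j

def PA (m : ℕ) (j : ℤ) (k : ℝ) (as bs : List (Fin (m + 1))) : Prop :=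
  PD m j as bs ∧ W m as bs = k

def PH (m : ℕ) (j : ℤ) (k : ℝ) (as bs : List (Fin (m + 1))) : Prop :=
  PD m j as bs ∧ W m as bs ≠ k ∧ x m 0 * mono m as bs ≠ 0

def PB (m : ℕ) (j : ℤ) (k : ℝ) (as bs : List (Fin (m + 1))) : Prop :=
  PD m j as bs ∧ W m as bs ≠ k ∧ ∃ t, as = (0 : Fin (m + 1)) :: t

lemma deg_eq (j : ℤ) : deg m j = Submodule.span ℂ (TP m (PD m j)) := rfl

lemma Aw_eq (j : ℤ) (k : ℝ) : Aw m j k = Submodule.span ℂ (TP m (PA m j k)) := by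
  unfold Aw TP PA PD
  congr 1
  ext γ
  constructor
  · rintro ⟨as, bs, h1, h2, h3, h4, h5⟩; exact ⟨as, bs, h1, h2, ⟨h3, h4⟩, h5⟩
  · rintro ⟨as, bs, h1, h2, ⟨h3, h4⟩, h5⟩; exact ⟨as, bs, h1, h2, h3, h4, h5⟩

lemma Ahat_eq (j : ℤ) (k : ℝ) : Ahat m j k = Submodule.span ℂ (TP m (PH m j k)) := by
  unfold Ahat TP PH PD
  congr 1
  ext γ
  constructor
  · rintro ⟨as, bs, h1, h2, h3, h4, h5, h6⟩; exact ⟨as, bs, h1, h2, ⟨h3, h4, h5⟩, h6⟩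
  · rintro ⟨as, bs, h1, h2, ⟨h3, h4, h5⟩, h6⟩; exact ⟨as, bs, h1, h2, h3, h4, h5, h6⟩

open Setup in
lemma map_Ahat_eq (S : Setup m) (j : ℤ) (k : ℝ) :
    Submodule.map (LinearMap.mulLeft ℂ (x m 0)) (Ahat m (j - 1) k)
      = Submodule.span ℂ (TP m (PB m j k)) := by
  rw [Ahat_eq, Submodule.map_span]
  congr 1
  ext γ
  constructor
  · rintro ⟨δ, ⟨as, bs, h1, h2, ⟨h3, h4, h5⟩, rfl⟩, rfl⟩
    have h0 : (0 : Fin (m + 1)) ∉ as := by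
      intro hmem
      exact h5 (x0_mul_mono_of_mem as bs h1 hmem)
    refine ⟨(0 : Fin (m + 1)) :: as, bs, sorted_cons_zero h1 h0, h2,
      ⟨?_, ?_, as, rfl⟩, ?_⟩
    · unfold PD at h3 ⊢
      simp only [List.length_cons] at *
      push_cast at h3 ⊢
      omega
    · rwa [W_cons_zero]
    · show LinearMap.mulLeft ℂ (x m 0) (mono m as bs) = mono m ((0 : Fin (m+1)) :: as) bs
      rw [LinearMap.mulLeft_apply, mono_cons]
  · rintro ⟨cs, ds, h1, h2, ⟨h3, h4, t, rfl⟩, rfl⟩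
    have hts : t.Pairwise (· < ·) := (List.pairwise_cons.1 h1).2
    have h0t : (0 : Fin (m + 1)) ∉ t := zero_not_mem_of_sorted_tail h1
    refine ⟨mono m t ds, ⟨t, ds, hts, h2, ⟨?_, ?_, ?_⟩, rfl⟩, ?_⟩
    · unfold PD at h3 ⊢
      simp only [List.length_cons] at h3
      push_cast at h3 ⊢
      omega
    · rwa [W_cons_zero] at h4
    · rw [← mono_cons]
      exact mono_ne_zero S h1 h2
    · show LinearMap.mulLeft ℂ (x m 0) (mono m t ds) = mono m ((0 : Fin (m+1)) :: t) ds
      rw [LinearMap.mulLeft_apply, mono_cons]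

lemma TP_union {P Q : List (Fin (m + 1)) → List (Fin (m + 1)) → Prop} :
    TP m (fun as bs => P as bs ∨ Q as bs) = TP m P ∪ TP m Q := by
  ext γ
  constructor
  · rintro ⟨as, bs, h1, h2, hPQ | hPQ, h5⟩
    · exact Or.inl ⟨as, bs, h1, h2, hPQ, h5⟩
    · exact Or.inr ⟨as, bs, h1, h2, hPQ, h5⟩
  · rintro (⟨as, bs, h1, h2, hP, h5⟩ | ⟨as, bs, h1, h2, hQ, h5⟩)
    · exact ⟨as, bs, h1, h2, Or.inl hP, h5⟩
    · exact ⟨as, bs, h1, h2, Or.inr hQ, h5⟩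

namespace Setup

/-- conjunct 1: the decomposition -/
lemma decomp (S : Setup m) (k : ℝ) (j : ℤ) :
    deg m j = Aw m j k
      ⊔ Submodule.map (LinearMap.mulLeft ℂ (x m 0)) (Ahat m (j - 1) k)
      ⊔ Ahat m j k := by
  rw [deg_eq, Aw_eq, map_Ahat_eq S, Ahat_eq, ← Submodule.span_union, ← Submodule.span_union]
  congr 1
  ext γ
  simp only [Set.mem_union]
  constructor
  · rintro ⟨as, bs, s1, s2, hlen, rfl⟩
    by_cases hW : W m as bs = k
    · exact Or.inl (Or.inl ⟨as, bs, s1, s2, ⟨hlen, hW⟩, rfl⟩)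
    · by_cases h0 : (0 : Fin (m + 1)) ∈ as
      · obtain ⟨t, rfl⟩ := sorted_zero_head s1 h0
        exact Or.inl (Or.inr ⟨0 :: t, bs, s1, s2, ⟨hlen, hW, t, rfl⟩, rfl⟩)
      · refine Or.inr ⟨as, bs, s1, s2, ⟨hlen, hW, ?_⟩, rfl⟩
        rw [← mono_cons]
        exact mono_ne_zero S (sorted_cons_zero s1 h0) s2
  · rintro ((⟨as, bs, s1, s2, hP, rfl⟩ | ⟨as, bs, s1, s2, hP, rfl⟩) | ⟨as, bs, s1, s2, hP, rfl⟩) <;>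
      exact ⟨as, bs, s1, s2, hP.1, rfl⟩

/-- conjunct 2 -/
lemma inf_Aw_map (S : Setup m) (k : ℝ) (j : ℤ) :
    Aw m j k ⊓ Submodule.map (LinearMap.mulLeft ℂ (x m 0)) (Ahat m (j - 1) k) = ⊥ := by
  rw [Aw_eq, map_Ahat_eq S]
  exact S.inf_TP (fun _ _ _ _ hA hB => hB.2.1 hA.2)

lemma sup_eq_spanAB (S : Setup m) (k : ℝ) (j : ℤ) :
    Aw m j k ⊔ Submodule.map (LinearMap.mulLeft ℂ (x m 0)) (Ahat m (j - 1) k)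
      = Submodule.span ℂ (TP m (fun as bs => PA m j k as bs ∨ PB m j k as bs)) := by
  rw [Aw_eq, map_Ahat_eq S, ← Submodule.span_union, ← TP_union]

lemma disj_ABH : ∀ (j : ℤ) (k : ℝ) as bs, as.Pairwise (· < ·) → bs.Pairwise (· < ·) →
    (PA m j k as bs ∨ PB m j k as bs) → PH m j k as bs → False := by
  rintro j k as bs s1 s2 (hA | hB) hH
  · exact hH.2.1 hA.2
  · obtain ⟨t, rfl⟩ := hB.2.2
    exact hH.2.2 (x0_mul_mono_of_mem _ _ s1 (by simp))

/-- conjunct 3 -/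
lemma inf_sup_Ahat (S : Setup m) (k : ℝ) (j : ℤ) :
    (Aw m j k ⊔ Submodule.map (LinearMap.mulLeft ℂ (x m 0)) (Ahat m (j - 1) k))
      ⊓ Ahat m j k = ⊥ := by
  rw [sup_eq_spanAB S, Ahat_eq]
  exact S.inf_TP (disj_ABH j k)

/-- conjunct 4 -/
lemma orth_Aw_map (S : Setup m) (k : ℝ) (j : ℤ) :
    ∀ a ∈ Aw m j k,
      ∀ b ∈ Submodule.map (LinearMap.mulLeft ℂ (x m 0)) (Ahat m (j - 1) k),
        S.ip a b = 0 := by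
  intro a ha b hb
  rw [Aw_eq] at ha
  rw [map_Ahat_eq S] at hb
  exact S.ip_TP_orth (fun _ _ _ _ hA hB => hB.2.1 hA.2) a ha b hb

/-- conjunct 5 -/
lemma orth_Aw_Ahat (S : Setup m) (k : ℝ) (j : ℤ) :
    ∀ a ∈ Aw m j k, ∀ b ∈ Ahat m j k, S.ip a b = 0 := by
  intro a ha b hb
  rw [Aw_eq] at ha
  rw [Ahat_eq] at hb
  exact S.ip_TP_orth (fun _ _ _ _ hA hH => hH.2.1 hA.2) a ha b hb

/-- conjunct 6 -/
lemma orth_map_Ahat (S : Setup m) (k : ℝ) (j : ℤ) :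
    ∀ a ∈ Submodule.map (LinearMap.mulLeft ℂ (x m 0)) (Ahat m (j - 1) k),
      ∀ b ∈ Ahat m j k, S.ip a b = 0 := by
  intro a ha b hb
  rw [map_Ahat_eq S] at ha
  rw [Ahat_eq] at hb
  refine S.ip_TP_orth ?_ a ha b hb
  rintro as bs s1 s2 hB hH
  exact disj_ABH j k as bs s1 s2 (Or.inr hB) hH

/-- conjunct 7: the kernel of the Laplacian -/
lemma ker_Delta_inf (S : Setup m) (k : ℝ) (j : ℤ) :
    LinearMap.ker (S.Delta k) ⊓ deg m j = Aw m j k := by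
  apply le_antisymm
  · rintro u ⟨hker, hdeg⟩
    rw [SetLike.mem_coe, LinearMap.mem_ker] at hker
    rw [SetLike.mem_coe, deg_eq] at hdeg
    obtain ⟨c, hsupp, rfl⟩ := Submodule.mem_span_set.1 hdeg
    rw [Finsupp.sum] at hker ⊢
    refine Submodule.sum_mem _ fun γ hγ => ?_
    obtain ⟨as, bs, s1, s2, hlen, rfl⟩ := hsupp hγ
    by_cases hW : W m as bs = k
    · exact Submodule.smul_mem _ _
        (Submodule.subset_span ⟨as, bs, s1, s2, hlen, hW, rfl⟩)
    · have hne : ((((W m as bs - k) / m) ^ 2 : ℝ) : ℂ) ≠ 0 := by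
        rw [Complex.ofReal_ne_zero]
        exact pow_ne_zero _ (div_ne_zero (sub_ne_zero.2 hW) (S.hm0))
      have e0 : S.ip (mono m as bs) (S.Delta k (∑ δ ∈ c.support, c δ • δ)) = 0 := by
        rw [hker, S.ip_zero_r]
      rw [map_sum, S.ip_sum_r] at e0
      have eterm : ∀ δ ∈ c.support, δ ≠ mono m as bs →
          S.ip (mono m as bs) (S.Delta k (c δ • δ)) = 0 := by
        intro δ hδ hne'
        obtain ⟨cs, ds, t1, t2, -, rfl⟩ := hsupp hδ
        rw [map_smul, S.Delta_mono k t1 t2, smul_smul, S.ip_smulr,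
          S.ip_ortho as bs cs ds s1 s2 t1 t2, if_neg, mul_zero]
        rintro ⟨rfl, rfl⟩
        exact hne' rfl
      rw [Finset.sum_eq_single (mono m as bs) eterm (fun h => by
        rw [Finsupp.notMem_support_iff.1 h, zero_smul, map_zero, S.ip_zero_r])] at e0
      rw [map_smul, S.Delta_mono k s1 s2, smul_smul, S.ip_smulr,
        S.ip_ortho as bs as bs s1 s2 s1 s2, if_pos ⟨rfl, rfl⟩, mul_one] at e0
      rcases mul_eq_zero.1 e0 with h | h
      · rw [h, zero_smul]
        exact Submodule.zero_mem _
      · exact absurd h hne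
  · refine le_inf ?_ ?_
    · rw [Aw_eq, Submodule.span_le]
      rintro γ ⟨as, bs, s1, s2, ⟨hlen, hW⟩, rfl⟩
      simp only [SetLike.mem_coe, LinearMap.mem_ker]
      rw [S.Delta_mono k s1 s2, hW]
      norm_num
    · rw [Aw_eq, deg_eq]
      refine Submodule.span_mono ?_
      rintro γ ⟨as, bs, s1, s2, hP, h5⟩
      exact ⟨as, bs, s1, s2, hP.1, h5⟩

/-- conjunct 8: the image of `d_k` -/
lemma map_Dk_deg (S : Setup m) (k : ℝ) (j : ℤ) :
    Submodule.map (S.Dk k) (deg m (j - 1))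
      = Submodule.map (LinearMap.mulLeft ℂ (x m 0)) (Ahat m (j - 1) k) := by
  rw [map_Ahat_eq S j k, deg_eq, Submodule.map_span]
  apply le_antisymm
  · rw [Submodule.span_le]
    rintro γ' ⟨γ, ⟨as, bs, s1, s2, hlen, rfl⟩, rfl⟩
    simp only [SetLike.mem_coe]
    rw [S.Dk_mono]
    by_cases h0 : (0 : Fin (m + 1)) ∈ as
    · rw [x0_mul_mono_of_mem as bs s1 h0, smul_zero]
      exact Submodule.zero_mem _
    · by_cases hW : W m as bs = k
      · rw [hW, sub_self, zero_div, Complex.ofReal_zero, zero_smul]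
        exact Submodule.zero_mem _
      · rw [← mono_cons]
        refine Submodule.smul_mem _ _ (Submodule.subset_span
          ⟨0 :: as, bs, sorted_cons_zero s1 h0, s2, ⟨?_, ?_, as, rfl⟩, rfl⟩)
        · simp only [PD, List.length_cons] at hlen ⊢
          push_cast at hlen ⊢
          omega
        · rwa [W_cons_zero]
  · rw [Submodule.span_le]
    rintro γ ⟨cs, ds, h1, h2, ⟨hlen, hW, t, rfl⟩, rfl⟩
    have hts : t.Pairwise (· < ·) := (List.pairwise_cons.1 h1).2
    have hW' : W m t ds ≠ k := by rwa [W_cons_zero] at hW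
    have hne : W m t ds - k ≠ 0 := sub_ne_zero.2 hW'
    have hscal : ((m / (W m t ds - k) : ℝ) : ℂ) * (((W m t ds - k) / m : ℝ) : ℂ) = 1 := by
      rw [← Complex.ofReal_mul, ← Complex.ofReal_one]
      congr 1
      field_simp [S.hm0, hne]
    have hPD : PD m (j - 1) t ds := by
      simp only [PD, List.length_cons] at hlen ⊢
      push_cast at hlen ⊢
      omega
    have himg : S.Dk k (mono m t ds) ∈ ⇑(S.Dk k) '' TP m (PD m (j - 1)) :=
      ⟨mono m t ds, ⟨t, ds, hts, h2, hPD, rfl⟩, rfl⟩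
    have heq : mono m ((0 : Fin (m + 1)) :: t) ds
        = ((m / (W m t ds - k) : ℝ) : ℂ) • S.Dk k (mono m t ds) := by
      rw [S.Dk_mono, smul_smul, hscal, one_smul, ← mono_cons]
    rw [SetLike.mem_coe, heq]
    exact Submodule.smul_mem _ _ (Submodule.subset_span himg)

/-- conjunct 9: the image of `d_k^*` -/
lemma map_dstar_deg (S : Setup m) (k : ℝ) (j : ℤ) :
    Submodule.map (S.dstar k) (deg m (j + 1)) = Ahat m j k := by
  rw [Ahat_eq, deg_eq, Submodule.map_span]
  apply le_antisymm
  · rw [Submodule.span_le]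
    rintro γ' ⟨γ, ⟨cs, ds, s1, s2, hlen, rfl⟩, rfl⟩
    simp only [SetLike.mem_coe]
    by_cases h0 : (0 : Fin (m + 1)) ∈ cs
    · obtain ⟨t, rfl⟩ := sorted_zero_head s1 h0
      have hts : t.Pairwise (· < ·) := (List.pairwise_cons.1 s1).2
      rw [S.dstar_mono_cons_zero k s1 s2]
      by_cases hW : W m t ds = k
      · rw [hW, sub_self, zero_div, Complex.ofReal_zero, zero_smul]
        exact Submodule.zero_mem _
      · refine Submodule.smul_mem _ _ (Submodule.subset_span
          ⟨t, ds, hts, s2, ⟨?_, hW, ?_⟩, rfl⟩)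
        · simp only [PD, List.length_cons] at hlen ⊢
          push_cast at hlen ⊢
          omega
        · rw [← mono_cons]
          exact mono_ne_zero S s1 s2
    · rw [S.dstar_mono_of_not_mem k s1 s2 h0]
      exact Submodule.zero_mem _
  · rw [Submodule.span_le]
    rintro γ ⟨as, bs, s1, s2, ⟨hlen, hW, hx0⟩, rfl⟩
    have h0 : (0 : Fin (m + 1)) ∉ as := fun hmem => hx0 (x0_mul_mono_of_mem as bs s1 hmem)
    have hs0 : ((0 : Fin (m + 1)) :: as).Pairwise (· < ·) := sorted_cons_zero s1 h0
    have hne : W m as bs - k ≠ 0 := sub_ne_zero.2 hW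
    have hscal : ((m / (W m as bs - k) : ℝ) : ℂ) * (((W m as bs - k) / m : ℝ) : ℂ) = 1 := by
      rw [← Complex.ofReal_mul, ← Complex.ofReal_one]
      congr 1
      field_simp [S.hm0, hne]
    have hPD : PD m (j + 1) ((0 : Fin (m + 1)) :: as) bs := by
      simp only [PD, List.length_cons] at hlen ⊢
      push_cast at hlen ⊢
      omega
    have himg : S.dstar k (mono m ((0 : Fin (m + 1)) :: as) bs)
        ∈ ⇑(S.dstar k) '' TP m (PD m (j + 1)) :=
      ⟨mono m ((0 : Fin (m + 1)) :: as) bs, ⟨_, bs, hs0, s2, hPD, rfl⟩, rfl⟩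
    have heq : mono m as bs
        = ((m / (W m as bs - k) : ℝ) : ℂ) • S.dstar k (mono m ((0 : Fin (m + 1)) :: as) bs) := by
      rw [S.dstar_mono_cons_zero k hs0 s2, smul_smul, hscal, one_smul]
    rw [SetLike.mem_coe, heq]
    exact Submodule.smul_mem _ _ (Submodule.subset_span himg)

end Setup
end SolvHodge


open SolvCE in
/-- For each `m ≥ 2`, `k ∈ ℝ` and `0 ≤ j ≤ 2m+2`, the
twisted complex `(⋀^•(g_m^* ⊗ ℂ), d_k)`, with the inner product `ip` making
the monomial basis orthonormal and with `d_k^*` the adjoint of `d_k`, has the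
orthogonal Hodge decomposition `⋀^j = A^j_k ⊕ x^1∧Â^{j-1}_k ⊕ Â^j_k`;
moreover `ker(Δ_k) ∩ ⋀^j = A^j_k`, `d_k(⋀^{j-1}) = x^1∧Â^{j-1}_k` and
`d_k^*(⋀^{j+1}) = Â^j_k`, where `Δ_k = d_k d_k^* + d_k^* d_k`. -/
theorem solvmanifold_hodge_decomposition (m : ℕ) (hm : 2 ≤ m)
    (d : Λg m →ₗ[ℂ] Λg m)
    -- `d` is an antiderivation:
    (hd1 : d 1 = 0)
    (hleib : ∀ (v : (Fin (m + 1) ⊕ Fin (m + 1)) → ℂ) (b : Λg m),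
      d (ExteriorAlgebra.ι ℂ v * b)
        = d (ExteriorAlgebra.ι ℂ v) * b - ExteriorAlgebra.ι ℂ v * d b)
    -- the Chevalley–Eilenberg structure equations of `g_m`:
    (hdx : ∀ a : Fin (m + 1),
      d (x m a) = (((1 - ((a : ℕ) : ℝ)) / m : ℝ) : ℂ) • (x m 0 * x m a))
    (hdy0 : d (y m 0) = -(x m 0 * y m 0))
    (hdy : ∀ b : Fin (m + 1), 1 ≤ (b : ℕ) →
      d (y m b) = ((((b : ℕ) : ℝ) / m : ℝ) : ℂ) • (x m 0 * y m b))
    -- the hermitian inner product making the monomial basis orthonormal: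
    (ip : Λg m → Λg m → ℂ)
    (ip_addl : ∀ a b c, ip (a + b) c = ip a c + ip b c)
    (ip_addr : ∀ a b c, ip a (b + c) = ip a b + ip a c)
    (ip_smull : ∀ (μ : ℂ) a b, ip (μ • a) b = starRingEnd ℂ μ * ip a b)
    (ip_smulr : ∀ (μ : ℂ) a b, ip a (μ • b) = μ * ip a b)
    (ip_ortho : ∀ as bs cs ds : List (Fin (m + 1)),
      as.Pairwise (· < ·) → bs.Pairwise (· < ·) →
      cs.Pairwise (· < ·) → ds.Pairwise (· < ·) →
      ip (mono m as bs) (mono m cs ds)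
        = if as = cs ∧ bs = ds then 1 else 0)
    -- the adjoints `d_k^*` of the twisted differentials
    -- `d_k = d - k θ∧·`, `θ = (1/m) x^1`:
    (dstar : ℝ → Λg m →ₗ[ℂ] Λg m)
    (hadj : ∀ (k : ℝ) (a b : Λg m),
      ip (dstar k a) b
        = ip a ((d - (k : ℂ) • LinearMap.mulLeft ℂ ((1 / (m : ℂ)) • x m 0)) b)) :
    ∀ (k : ℝ) (j : ℤ), 0 ≤ j → j ≤ 2 * m + 2 →
      -- the decomposition `⋀^j = A^j_k ⊕ x^1∧Â^{j-1}_k ⊕ Â^j_k` …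
      deg m j
        = Aw m j k ⊔ Submodule.map (LinearMap.mulLeft ℂ (x m 0)) (Ahat m (j - 1) k)
            ⊔ Ahat m j k ∧
      -- … is direct …
      Aw m j k ⊓ Submodule.map (LinearMap.mulLeft ℂ (x m 0)) (Ahat m (j - 1) k) = ⊥ ∧
      (Aw m j k ⊔ Submodule.map (LinearMap.mulLeft ℂ (x m 0)) (Ahat m (j - 1) k))
          ⊓ Ahat m j k = ⊥ ∧
      -- … and orthogonal:
      (∀ a ∈ Aw m j k,
        ∀ b ∈ Submodule.map (LinearMap.mulLeft ℂ (x m 0)) (Ahat m (j - 1) k),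
          ip a b = 0) ∧
      (∀ a ∈ Aw m j k, ∀ b ∈ Ahat m j k, ip a b = 0) ∧
      (∀ a ∈ Submodule.map (LinearMap.mulLeft ℂ (x m 0)) (Ahat m (j - 1) k),
        ∀ b ∈ Ahat m j k, ip a b = 0) ∧
      -- `ker(Δ_k) ∩ ⋀^j = A^j_k`:
      LinearMap.ker
          ((d - (k : ℂ) • LinearMap.mulLeft ℂ ((1 / (m : ℂ)) • x m 0)) ∘ₗ dstar k
            + dstar k ∘ₗ
              (d - (k : ℂ) • LinearMap.mulLeft ℂ ((1 / (m : ℂ)) • x m 0)))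
          ⊓ deg m j
        = Aw m j k ∧
      -- `d_k(⋀^{j-1}) = x^1 ∧ Â^{j-1}_k`:
      Submodule.map (d - (k : ℂ) • LinearMap.mulLeft ℂ ((1 / (m : ℂ)) • x m 0))
          (deg m (j - 1))
        = Submodule.map (LinearMap.mulLeft ℂ (x m 0)) (Ahat m (j - 1) k) ∧
      -- `d_k^*(⋀^{j+1}) = Â^j_k`:
      Submodule.map (dstar k) (deg m (j + 1)) = Ahat m j k := by
  intro k j _ _
  let S : SolvHodge.Setup m :=
    ⟨hm, d, hd1, hleib, hdx, hdy0, hdy, ip, ip_addl, ip_addr, ip_smull, ip_smulr, ip_ortho,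
      dstar, hadj⟩
  exact ⟨S.decomp k j, S.inf_Aw_map k j, S.inf_sup_Ahat k j, S.orth_Aw_map k j,
    S.orth_Aw_Ahat k j, S.orth_map_Ahat k j, S.ker_Delta_inf k j, S.map_Dk_deg k j,
    S.map_dstar_deg k j⟩
end
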